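/- arXiv:2405.20124 — 5 statements merged into one kernel-verified Lean document; each statement's English description precedes it below -/
import Mathlib

section
/- Assume Assumption 1 (the minimum of the primal problem (CSE) equals the maximum of the dual problem). Then: (i) if Σ* solves (P_Mat), then X* = Σ* solves (CSE) and Σ* solves the dual problem; (ii) if X* solves (CSE) and Σ* solves the dual problem, then X* = Σ* and X* solves (P_Mat). -/
open Matrix Set Filter MeasureTheory
open scoped BigOperators Classical

noncomputable section

/-- The space of real `p × p` matrices. -/
abbrev Mat (p : ℕ) := Matrix (Fin p) (Fin p) ℝ

/-- Orthogonal matrix. -/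
def IsOrthoMat {p : ℕ} (V : Mat p) : Prop := V * Vᵀ = 1

/-- The loss function `Tr(X²) − 2 Tr(Σ X)` of the estimation problem. -/
def cseLoss {p : ℕ} (X S : Mat p) : ℝ := (X * X).trace - 2 * (S * X).trace

/-- Squared Frobenius norm. -/
def frobSq {p : ℕ} (X : Mat p) : ℝ := (Xᵀ * X).trace

/-- Feasibility for the uncertainty set `B_ε(Σ̂)`. -/
def Feas {p : ℕ} (D : Mat p → Mat p → EReal) (Sh : Mat p) (ε : ℝ) (S : Mat p) : Prop :=
  S.PosSemidef ∧ D S Sh ≤ (ε : EReal)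

/-- The worst-case (primal) objective of the problem (CSE). -/
def primalVal {p : ℕ} (D : Mat p → Mat p → EReal) (Sh : Mat p) (ε : ℝ) (X : Mat p) : EReal :=
  ⨆ S : {S : Mat p // Feas D Sh ε S}, (cseLoss X S.1 : EReal)

/-- The inner (dual) objective. -/
def dualVal {p : ℕ} (S : Mat p) : EReal :=
  ⨅ X : {X : Mat p // X.PosSemidef}, (cseLoss X.1 S : EReal)

/-- `X` solves the primal problem (CSE). -/
def IsCSESol {p : ℕ} (D : Mat p → Mat p → EReal) (Sh : Mat p) (ε : ℝ) (X : Mat p) : Prop :=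
  X.PosSemidef ∧ ∀ Y : Mat p, Y.PosSemidef → primalVal D Sh ε X ≤ primalVal D Sh ε Y

/-- `S` solves the dual problem. -/
def IsDualSol {p : ℕ} (D : Mat p → Mat p → EReal) (Sh : Mat p) (ε : ℝ) (S : Mat p) : Prop :=
  Feas D Sh ε S ∧ ∀ T : Mat p, Feas D Sh ε T → dualVal T ≤ dualVal S

/-- `S` solves the problem (P_Mat). -/
def IsPMatSol {p : ℕ} (D : Mat p → Mat p → EReal) (Sh : Mat p) (ε : ℝ) (S : Mat p) : Prop :=
  Feas D Sh ε S ∧ ∀ T : Mat p, Feas D Sh ε T → frobSq S ≤ frobSq T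

/-- Assumption 1 (minimax): the optimal value of (CSE) equals the optimal value of the dual. -/
def MinimaxEq {p : ℕ} (D : Mat p → Mat p → EReal) (Sh : Mat p) (ε : ℝ) : Prop :=
  (⨅ X : {X : Mat p // X.PosSemidef}, primalVal D Sh ε X.1)
    = ⨆ S : {S : Mat p // Feas D Sh ε S}, dualVal S.1

/-- `x` solves the problem (P_Vec). -/
def IsPVecSol {p : ℕ} (d : ℝ → ℝ → EReal) (xh : Fin p → ℝ) (ε : ℝ) (x : Fin p → ℝ) : Prop :=
  (∀ i, 0 ≤ x i) ∧ (∑ i, d (x i) (xh i)) ≤ (ε : EReal) ∧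
  ∀ y : Fin p → ℝ, (∀ i, 0 ≤ y i) → (∑ i, d (y i) (xh i)) ≤ (ε : EReal) →
    ∑ i, (x i) ^ 2 ≤ ∑ i, (y i) ^ 2

/-- `D` is a divergence: nonnegative, and zero iff the arguments coincide (on its domain). -/
def DivergenceBasic {p : ℕ} (D : Mat p → Mat p → EReal) : Prop :=
  (∀ X Y : Mat p, 0 ≤ D X Y) ∧
  (∀ X Y : Mat p, X.PosSemidef → Y.PosSemidef → D X Y ≠ ⊤ → (D X Y = 0 ↔ X = Y))

/-- Assumption 2 (spectral divergence) for `D` with generator `d`: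
(a) orthogonal equivariance, (b) spectrality with continuous generator, (c) rearrangement. -/
def Assumption2 {p : ℕ} (D : Mat p → Mat p → EReal) (d : ℝ → ℝ → EReal) : Prop :=
  (∀ X Y : Mat p, X.PosSemidef → Y.PosSemidef → ∀ V : Mat p, IsOrthoMat V →
      D X Y = D (V * X * Vᵀ) (V * Y * Vᵀ)) ∧
  (∀ x y : Fin p → ℝ, (∀ i, 0 ≤ x i) → (∀ i, 0 ≤ y i) →
      D (Matrix.diagonal x) (Matrix.diagonal y) = ∑ i, d (x i) (y i)) ∧
  (∀ b : ℝ, 0 < b → ContinuousOn (fun a => d a b) (Set.Ici 0)) ∧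
  (∀ x y : Fin p → ℝ, Monotone x → Monotone y → (∀ i, 0 ≤ x i) → (∀ i, 0 ≤ y i) →
    ∀ V : Mat p, IsOrthoMat V →
      D (Matrix.diagonal x) (Matrix.diagonal y)
        ≤ D (V * Matrix.diagonal x * Vᵀ) (Matrix.diagonal y) ∧
      (D (V * Matrix.diagonal x * Vᵀ) (Matrix.diagonal y) ≠ ⊤ →
        (D (V * Matrix.diagonal x * Vᵀ) (Matrix.diagonal y)
            = D (Matrix.diagonal x) (Matrix.diagonal y)
          ↔ V * Matrix.diagonal x * Vᵀ = Matrix.diagonal x)))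

/-- The generator-level part of Assumption 2: `d` is a spectral divergence on `ℝ₊`. -/
def GenBasic (d : ℝ → ℝ → EReal) : Prop :=
  (∀ a b : ℝ, 0 ≤ a → 0 ≤ b → 0 ≤ d a b) ∧
  (∀ a b : ℝ, 0 ≤ a → 0 ≤ b → d a b ≠ ⊤ → (d a b = 0 ↔ a = b)) ∧
  (∀ b : ℝ, 0 < b → ContinuousOn (fun a => d a b) (Set.Ici 0))

/-- Assumption 3 (regularity of input parameters). -/
def Assumption3 {p : ℕ} (d : ℝ → ℝ → EReal) (xh : Fin p → ℝ) (ε : ℝ) : Prop :=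
  (∀ i, d (xh i) (xh i) ≠ ⊤) ∧ 0 < ε ∧ (ε : EReal) < ∑ i, d 0 (xh i)

/-- Assumption 4 (smoothness and convexity of the generator): for every `b > 0`,
`a ↦ d(a,b)` is finite and twice continuously differentiable on `(0,∞)` with partial
derivatives `d₁, d₂`, and convex on `[0,b]` (as an extended-real-valued function). -/
def Assumption4 (d : ℝ → ℝ → EReal) (d₁ d₂ : ℝ → ℝ → ℝ) : Prop :=
  (∀ a b : ℝ, 0 < a → 0 < b → d a b ≠ ⊤) ∧
  (∀ a b : ℝ, 0 < a → 0 < b → HasDerivAt (fun t => (d t b).toReal) (d₁ a b) a) ∧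
  (∀ a b : ℝ, 0 < a → 0 < b → HasDerivAt (fun t => d₁ t b) (d₂ a b) a) ∧
  (∀ b : ℝ, 0 < b → ContinuousOn (fun a => d₂ a b) (Set.Ioi 0)) ∧
  (∀ b : ℝ, 0 < b → ∀ a₁ ∈ Set.Icc (0:ℝ) b, ∀ a₂ ∈ Set.Icc (0:ℝ) b, ∀ t ∈ Set.Icc (0:ℝ) 1,
      d (t * a₁ + (1 - t) * a₂) b ≤ (t : EReal) * d a₁ b + ((1 - t : ℝ) : EReal) * d a₂ b)

/-- Assumption 5 (differential inequality): `d` is twice continuously differentiable on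
`(0,∞)²` (mixed partial `d₁b` of `d₁` in `b` exists and the second partials are continuous)
and satisfies `a·∂²d/∂a² + b·∂²d/∂a∂b ≥ ∂d/∂a` for `0 < a < b`. -/
def Assumption5 (d₁ d₂ d₁b : ℝ → ℝ → ℝ) : Prop :=
  (∀ a b : ℝ, 0 < a → 0 < b → HasDerivAt (fun t => d₁ a t) (d₁b a b) b) ∧
  ContinuousOn (fun q : ℝ × ℝ => d₂ q.1 q.2) (Set.Ioi 0 ×ˢ Set.Ioi 0) ∧
  ContinuousOn (fun q : ℝ × ℝ => d₁b q.1 q.2) (Set.Ioi 0 ×ˢ Set.Ioi 0) ∧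
  (∀ a b : ℝ, 0 < a → a < b → d₁ a b ≤ a * d₂ a b + b * d₁b a b)

/-- The eigenvalue map `s`: for `γ, b > 0`, `s(γ,b)` is the unique `a ≥ 0` with
`2a + γ·∂d/∂a(a,b) = 0`; and `s(γ,b) = 0` if `γ = 0` or `b = 0`. -/
def EigenMapSpec (d₁ s : ℝ → ℝ → ℝ) : Prop :=
  (∀ γ b : ℝ, γ = 0 ∨ b = 0 → s γ b = 0) ∧
  (∀ γ b : ℝ, 0 < γ → 0 < b →
    0 ≤ s γ b ∧ 2 * s γ b + γ * d₁ (s γ b) b = 0 ∧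
    ∀ a : ℝ, 0 ≤ a → 2 * a + γ * d₁ a b = 0 → a = s γ b)


section Stmt1Aux

variable {p : ℕ}

lemma frobSq_eq_sum' (A : Mat p) : frobSq A = ∑ j, ∑ i, (A i j)^2 := by
  simp [frobSq, Matrix.trace, Matrix.diag, Matrix.mul_apply, sq]

lemma frobSq_nonneg' (A : Mat p) : 0 ≤ frobSq A := by
  rw [frobSq_eq_sum']; positivity

lemma frobSq_eq_zero' {A : Mat p} (h : frobSq A ≤ 0) : A = 0 := by
  have h0 : frobSq A = 0 := le_antisymm h (frobSq_nonneg' A)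
  rw [frobSq_eq_sum'] at h0
  ext i j
  have hj := (Finset.sum_eq_zero_iff_of_nonneg
    (fun j _ => Finset.sum_nonneg fun i _ => sq_nonneg _)).mp h0 j (Finset.mem_univ _)
  have hi := (Finset.sum_eq_zero_iff_of_nonneg (fun i _ => sq_nonneg _)).mp hj i (Finset.mem_univ _)
  simpa using pow_eq_zero_iff two_ne_zero |>.mp hi

/-- Frobenius inner product. -/
def ipM (A B : Mat p) : ℝ := (Aᵀ * B).trace

lemma ipM_comm' (A B : Mat p) : ipM A B = ipM B A := by
  unfold ipM
  rw [← Matrix.trace_transpose (Aᵀ * B), Matrix.transpose_mul, Matrix.transpose_transpose]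

lemma frobSq_add' (A B : Mat p) : frobSq (A + B) = frobSq A + 2 * ipM A B + frobSq B := by
  have hc : (Bᵀ * A).trace = (Aᵀ * B).trace := ipM_comm' B A
  simp only [frobSq, ipM, Matrix.transpose_add, Matrix.add_mul, Matrix.mul_add,
    Matrix.trace_add] at *
  linarith

lemma frobSq_neg' (A : Mat p) : frobSq (-A) = frobSq A := by
  simp [frobSq_eq_sum']

lemma frobSq_smul' (c : ℝ) (A : Mat p) : frobSq (c • A) = c^2 * frobSq A := by
  simp [frobSq_eq_sum', Finset.mul_sum, mul_pow]

lemma ipM_smul_left' (c : ℝ) (A B : Mat p) : ipM (c • A) B = c * ipM A B := by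
  simp [ipM, Matrix.transpose_smul, Matrix.smul_mul, Matrix.trace_smul, smul_eq_mul]

lemma ipM_neg_right' (A B : Mat p) : ipM A (-B) = - ipM A B := by
  simp [ipM, Matrix.mul_neg]

lemma young' (A B : Mat p) {t : ℝ} (ht : 0 < t) :
    2 * (t * ipM A B) ≤ t^2 * frobSq A + frobSq B := by
  have h0 : 0 ≤ frobSq (t • A + (-B)) := frobSq_nonneg' _
  rw [frobSq_add', frobSq_neg', frobSq_smul', ipM_neg_right', ipM_smul_left'] at h0
  linarith

lemma psd_transpose' {A : Mat p} (hA : A.PosSemidef) : Aᵀ = A := by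
  have := hA.1
  rwa [Matrix.IsHermitian, Matrix.conjTranspose] at this

lemma cseLoss_eq' {X S : Mat p} (hX : Xᵀ = X) (hS : Sᵀ = S) :
    cseLoss X S = frobSq (X - S) - frobSq S := by
  simp only [cseLoss, frobSq, Matrix.transpose_sub, hX, hS, Matrix.sub_mul, Matrix.mul_sub,
    Matrix.trace_sub]
  rw [Matrix.trace_mul_comm X S]
  ring

lemma dualVal_eq' {S : Mat p} (hS : S.PosSemidef) :
    dualVal S = ((-frobSq S : ℝ) : EReal) := by
  have hSt := psd_transpose' hS
  apply le_antisymm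
  · refine iInf_le_of_le ⟨S, hS⟩ ?_
    have : cseLoss S S = -frobSq S := by
      rw [cseLoss_eq' hSt hSt, sub_self]
      simp [frobSq]
    show ((cseLoss S S : ℝ) : EReal) ≤ ((-frobSq S : ℝ) : EReal)
    exact_mod_cast this.le
  · refine le_iInf fun X => ?_
    have hXt := psd_transpose' X.2
    have : -frobSq S ≤ cseLoss X.1 S := by
      rw [cseLoss_eq' hXt hSt]
      have := frobSq_nonneg' (X.1 - S)
      linarith
    exact_mod_cast this

end Stmt1Aux

/-- Proposition 1: dual characterization of `X*`.
Under Assumption 1 (minimax), (i) every solution of (P_Mat) solves (CSE) and the dual;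
(ii) if `X*` solves (CSE) and `Σ*` solves the dual, then `X* = Σ*` and `X*` solves (P_Mat). -/
theorem stmt_1 {p : ℕ} (D : Mat p → Mat p → EReal) (Sh : Mat p) (ε : ℝ)
    (hSh : Sh.PosSemidef) (hε : 0 < ε)
    (hDbasic : DivergenceBasic D)
    (hA1 : MinimaxEq D Sh ε) :
    (∀ S : Mat p, IsPMatSol D Sh ε S → IsCSESol D Sh ε S ∧ IsDualSol D Sh ε S) ∧
    (∀ X S : Mat p, IsCSESol D Sh ε X → IsDualSol D Sh ε S →
      X = S ∧ IsPMatSol D Sh ε X) := by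
  classical
  have supDual : ∀ S : Mat p, Feas D Sh ε S → (∀ T, Feas D Sh ε T → dualVal T ≤ dualVal S) →
      (⨆ T : {T : Mat p // Feas D Sh ε T}, dualVal T.1) = ((-frobSq S : ℝ) : EReal) := by
    intro S hSfeas hopt
    apply le_antisymm
    · exact iSup_le fun T => (hopt T.1 T.2).trans_eq (dualVal_eq' hSfeas.1)
    · rw [← dualVal_eq' hSfeas.1]
      exact le_iSup (fun T : {T : Mat p // Feas D Sh ε T} => dualVal T.1) ⟨S, hSfeas⟩
  constructor
  · rintro S ⟨hSfeas, hSmin⟩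
    have hSpsd := hSfeas.1
    have hSt := psd_transpose' hSpsd
    have hdualS : ∀ T, Feas D Sh ε T → dualVal T ≤ dualVal S := by
      intro T hT
      rw [dualVal_eq' hT.1, dualVal_eq' hSpsd]
      exact_mod_cast neg_le_neg (hSmin T hT)
    have hsup := supDual S hSfeas hdualS
    have hinf : (⨅ X : {X : Mat p // X.PosSemidef}, primalVal D Sh ε X.1)
        = ((-frobSq S : ℝ) : EReal) := hA1.trans hsup
    have key : ∀ T, Feas D Sh ε T → cseLoss S T ≤ -frobSq S := by
      intro T hT
      have hTt := psd_transpose' hT.1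
      have hKmin := hSmin T hT
      rw [cseLoss_eq' hSt hTt]
      have main : frobSq (S - T) ≤ frobSq T - frobSq S := by
        set K : ℝ := frobSq T - frobSq S with hKdef
        have hK0 : 0 ≤ K := by simp only [hKdef]; linarith
        apply le_of_forall_pos_le_add
        intro η hη
        obtain ⟨t, htdef⟩ : ∃ t : ℝ, t = 2*K/η + 1 := ⟨_, rfl⟩
        have ht : 0 < t := by rw [htdef]; positivity
        obtain ⟨δ, hδdef⟩ : ∃ δ : ℝ, δ = (K + η)/(2*(1+t)^2) := ⟨_, rfl⟩
        have hδ : 0 < δ := by rw [hδdef]; positivity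
        have hlt : (⨅ X : {X : Mat p // X.PosSemidef}, primalVal D Sh ε X.1)
            < (((-frobSq S + δ : ℝ)) : EReal) := by
          rw [hinf]
          exact_mod_cast (by linarith : -frobSq S < -frobSq S + δ)
        obtain ⟨X, hX⟩ := iInf_lt_iff.mp hlt
        have hXt := psd_transpose' X.2
        have boundAt : ∀ U, Feas D Sh ε U → cseLoss X.1 U < -frobSq S + δ := by
          intro U hU
          have h1 : ((cseLoss X.1 U : ℝ) : EReal) ≤ primalVal D Sh ε X.1 :=
            le_iSup (fun W : {W : Mat p // Feas D Sh ε W} => ((cseLoss X.1 W.1 : ℝ) : EReal))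
              ⟨U, hU⟩
          exact_mod_cast lt_of_le_of_lt h1 hX
        have hA : frobSq (X.1 - S) ≤ δ := by
          have := boundAt S hSfeas
          rw [cseLoss_eq' hXt hSt] at this; linarith
        have hB : frobSq (X.1 - T) ≤ K + δ := by
          have := boundAt T hT
          rw [cseLoss_eq' hXt hTt] at this
          simp only [hKdef]; linarith
        have hfa : frobSq (S - X.1) ≤ δ := by
          rw [show S - X.1 = -(X.1 - S) by abel, frobSq_neg']; exact hA
        have hfa0 := frobSq_nonneg' (S - X.1)
        have hfb0 := frobSq_nonneg' (X.1 - T)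
        have hy := young' (S - X.1) (X.1 - T) ht
        have hexp : frobSq (S - T)
            = frobSq (S - X.1) + 2 * ipM (S - X.1) (X.1 - T) + frobSq (X.1 - T) := by
          rw [show S - T = (S - X.1) + (X.1 - T) by abel]; exact frobSq_add' _ _
        have hδ2 : δ * (1+t)^2 = (K+η)/2 := by
          rw [hδdef]; field_simp
        have htη : t * η = 2*K + η := by
          rw [htdef]; field_simp
        have step : t * frobSq (S - T) ≤ t * (K + η) := by
          nlinarith [hy, mul_le_mul_of_nonneg_left hfa ht.le,
            mul_le_mul_of_nonneg_left hB ht.le,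
            mul_le_mul_of_nonneg_left hfa (sq_nonneg t),
            mul_le_mul_of_nonneg_left hexp.le ht.le,
            mul_le_mul_of_nonneg_left hexp.ge ht.le, ht, hη, hK0]
        exact le_of_mul_le_mul_left step ht
      linarith
    have hprimalS : primalVal D Sh ε S ≤ ((-frobSq S : ℝ) : EReal) :=
      iSup_le fun T => by exact_mod_cast key T.1 T.2
    refine ⟨⟨hSpsd, fun Y hY => ?_⟩, ⟨hSfeas, hdualS⟩⟩
    calc primalVal D Sh ε S ≤ ((-frobSq S : ℝ) : EReal) := hprimalS
      _ = ⨅ X : {X : Mat p // X.PosSemidef}, primalVal D Sh ε X.1 := hinf.symm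
      _ ≤ primalVal D Sh ε Y :=
        iInf_le (fun X : {X : Mat p // X.PosSemidef} => primalVal D Sh ε X.1) ⟨Y, hY⟩
  · rintro X S hX hS
    obtain ⟨hSfeas, hSopt⟩ := hS
    have hSpsd := hSfeas.1
    have hsup := supDual S hSfeas hSopt
    have hinf : (⨅ Y : {Y : Mat p // Y.PosSemidef}, primalVal D Sh ε Y.1)
        = ((-frobSq S : ℝ) : EReal) := hA1.trans hsup
    have hXv : primalVal D Sh ε X ≤ ((-frobSq S : ℝ) : EReal) := by
      rw [← hinf]
      exact le_iInf fun Y => hX.2 Y.1 Y.2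
    have hcse : ((cseLoss X S : ℝ) : EReal) ≤ ((-frobSq S : ℝ) : EReal) :=
      (le_iSup (fun W : {W : Mat p // Feas D Sh ε W} => ((cseLoss X W.1 : ℝ) : EReal))
        ⟨S, hSfeas⟩).trans hXv
    have hreal : cseLoss X S ≤ -frobSq S := by exact_mod_cast hcse
    have hXt := psd_transpose' hX.1
    have hSt := psd_transpose' hSpsd
    rw [cseLoss_eq' hXt hSt] at hreal
    have hXS : X = S := by
      have hzero : X - S = 0 := frobSq_eq_zero' (by linarith)
      rwa [sub_eq_zero] at hzero
    refine ⟨hXS, ?_⟩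
    rw [hXS]
    refine ⟨hSfeas, fun T hT => ?_⟩
    have h2 := hSopt T hT
    rw [dualVal_eq' hT.1, dualVal_eq' hSpsd] at h2
    have h3 : -frobSq T ≤ -frobSq S := by exact_mod_cast h2
    linarith
end
end

section
/- Suppose the divergence D satisfies Assumption 2. Then: (i) problem (P_Mat) is feasible if and only if problem (P_Vec) is feasible; (ii) if x* solves (P_Vec), then V̂ Diag(x*) V̂ᵀ solves (P_Mat); (iii) if Σ* solves (P_Mat), then the vector λ(Σ*) of eigenvalues of Σ* arranged in nondecreasing order solves (P_Vec); (iv) problems (P_Mat) and (P_Vec) share the same optimal value. -/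
open Matrix Set Filter MeasureTheory
open scoped BigOperators Classical

noncomputable section

namespace S2A

variable {p : ℕ}

lemma ortho_tr {V : Mat p} (hV : IsOrthoMat V) : Vᵀ * V = 1 := by
  rw [mul_eq_one_comm]; exact hV

lemma ortho_transpose {V : Mat p} (hV : IsOrthoMat V) : IsOrthoMat Vᵀ := by
  unfold IsOrthoMat; rw [Matrix.transpose_transpose]; exact ortho_tr hV

lemma ortho_mul {V W : Mat p} (hV : IsOrthoMat V) (hW : IsOrthoMat W) :
    IsOrthoMat (V * W) := by
  unfold IsOrthoMat at *
  rw [Matrix.transpose_mul, Matrix.mul_assoc, ← Matrix.mul_assoc W, hW, Matrix.one_mul, hV]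

lemma conj_psd (V : Mat p) {x : Fin p → ℝ} (hx : ∀ i, 0 ≤ x i) :
    (V * Matrix.diagonal x * Vᵀ).PosSemidef := by
  have := (Matrix.posSemidef_diagonal_iff.mpr hx).mul_mul_conjTranspose_same V
  simpa [Matrix.conjTranspose_eq_transpose_of_trivial] using this

lemma diag_of_conj {W : Mat p} (D : Mat p) (hW : IsOrthoMat W) :
    Wᵀ * (W * D * Wᵀ) * W = D := by
  simp only [← Matrix.mul_assoc]
  rw [ortho_tr hW, Matrix.one_mul, Matrix.mul_assoc, ortho_tr hW, Matrix.mul_one]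

lemma frobSq_conj {V : Mat p} (hV : IsOrthoMat V) (x : Fin p → ℝ) :
    frobSq (V * Matrix.diagonal x * Vᵀ) = ∑ i, x i ^ 2 := by
  have hsymm : (V * Matrix.diagonal x * Vᵀ)ᵀ = V * Matrix.diagonal x * Vᵀ := by
    rw [Matrix.transpose_mul, Matrix.transpose_mul, Matrix.transpose_transpose,
      Matrix.diagonal_transpose, Matrix.mul_assoc]
  unfold frobSq
  rw [hsymm]
  have : (V * Matrix.diagonal x * Vᵀ) * (V * Matrix.diagonal x * Vᵀ)
      = V * (Matrix.diagonal x * Matrix.diagonal x) * Vᵀ := by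
    simp only [← Matrix.mul_assoc]
    rw [Matrix.mul_assoc _ Vᵀ V, ortho_tr hV, Matrix.mul_one]
  rw [this, Matrix.trace_mul_comm, ← Matrix.mul_assoc, ortho_tr hV, Matrix.one_mul,
    Matrix.diagonal_mul_diagonal, Matrix.trace_diagonal]
  exact Finset.sum_congr rfl fun i _ => (sq (x i)).symm

lemma perm_conj (U : Mat p) (x : Fin p → ℝ) (σ : Equiv.Perm (Fin p)) :
    (U.submatrix id ⇑σ) * Matrix.diagonal (x ∘ ⇑σ) * (U.submatrix id ⇑σ)ᵀ
      = U * Matrix.diagonal x * Uᵀ := by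
  rw [Matrix.transpose_submatrix, ← Matrix.submatrix_diagonal_equiv x σ,
    Matrix.submatrix_mul_equiv, Matrix.submatrix_mul_equiv, Matrix.submatrix_id_id]

lemma perm_ortho {U : Mat p} (hU : IsOrthoMat U) (σ : Equiv.Perm (Fin p)) :
    IsOrthoMat (U.submatrix id ⇑σ) := by
  unfold IsOrthoMat at *
  rw [Matrix.transpose_submatrix, Matrix.submatrix_mul_equiv, hU, Matrix.submatrix_id_id]

lemma spectral {S : Mat p} (hS : S.PosSemidef) :
    ∃ (μ : Fin p → ℝ) (W : Mat p), Monotone μ ∧ IsOrthoMat W ∧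
      S = W * Matrix.diagonal μ * Wᵀ := by
  have hH := hS.1
  set U : Mat p := (hH.eigenvectorUnitary : Mat p) with hUdef
  have hU : IsOrthoMat U := by
    have := (Matrix.mem_unitaryGroup_iff).mp hH.eigenvectorUnitary.2
    unfold IsOrthoMat
    rwa [← Matrix.conjTranspose_eq_transpose_of_trivial]
  have hst : S = U * Matrix.diagonal hH.eigenvalues * Uᵀ := by
    have := hH.spectral_theorem
    rw [← Matrix.conjTranspose_eq_transpose_of_trivial]
    have h2 : (RCLike.ofReal ∘ hH.eigenvalues : Fin p → ℝ) = hH.eigenvalues := by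
      ext i; simp
    rw [h2] at this
    exact this
  set σ := Tuple.sort hH.eigenvalues
  refine ⟨hH.eigenvalues ∘ ⇑σ, U.submatrix id ⇑σ, Tuple.monotone_sort _,
    perm_ortho hU σ, ?_⟩
  rw [perm_conj, ← hst]

end S2A

namespace S2A

variable {p : ℕ}

lemma vecToMat (D : Mat p → Mat p → EReal) (d : ℝ → ℝ → EReal)
    (Sh : Mat p) (xh : Fin p → ℝ) (Vh : Mat p)
    (hnn : ∀ i, 0 ≤ xh i) (hV : IsOrthoMat Vh)
    (hdec : Sh = Vh * Matrix.diagonal xh * Vhᵀ) (hA2 : Assumption2 D d)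
    (x : Fin p → ℝ) (hx : ∀ i, 0 ≤ x i) :
    D (Vh * Matrix.diagonal x * Vhᵀ) Sh = ∑ i, d (x i) (xh i) := by
  have h0 := hA2.1 (Matrix.diagonal x) (Matrix.diagonal xh)
    (Matrix.posSemidef_diagonal_iff.mpr hx) (Matrix.posSemidef_diagonal_iff.mpr hnn) Vh hV
  rw [← hdec] at h0
  rw [← h0]
  exact hA2.2.1 x xh hx hnn

lemma matToVec (D : Mat p → Mat p → EReal) (d : ℝ → ℝ → EReal)
    (Sh : Mat p) (xh : Fin p → ℝ) (Vh : Mat p)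
    (hSh : Sh.PosSemidef) (hmono : Monotone xh) (hnn : ∀ i, 0 ≤ xh i)
    (hV : IsOrthoMat Vh) (hdec : Sh = Vh * Matrix.diagonal xh * Vhᵀ)
    (hA2 : Assumption2 D d)
    {S : Mat p} (hS : S.PosSemidef) {μ : Fin p → ℝ} {W : Mat p}
    (hμ : Monotone μ) (hW : IsOrthoMat W) (heq : S = W * Matrix.diagonal μ * Wᵀ) :
    (∀ i, 0 ≤ μ i) ∧ (∑ i, d (μ i) (xh i)) ≤ D S Sh ∧ ∑ i, μ i ^ 2 = frobSq S := by
  have hdiag : Matrix.diagonal μ = Wᵀ * S * W := by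
    rw [heq]; exact (diag_of_conj _ hW).symm
  have hμnn : ∀ i, 0 ≤ μ i := by
    have hpsd : (Wᵀ * S * W).PosSemidef := by
      have := hS.mul_mul_conjTranspose_same Wᵀ
      simpa [Matrix.conjTranspose_eq_transpose_of_trivial, Matrix.transpose_transpose]
        using this
    rw [← hdiag] at hpsd
    exact fun i => Matrix.posSemidef_diagonal_iff.mp hpsd i
  have hVt : IsOrthoMat Vhᵀ := ortho_transpose hV
  have hDeq : D S Sh = D (Vhᵀ * S * Vh) (Vhᵀ * Sh * Vh) := by
    have := hA2.1 S Sh hS hSh Vhᵀ hVt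
    simpa [Matrix.transpose_transpose] using this
  have hShd : Vhᵀ * Sh * Vh = Matrix.diagonal xh := by
    rw [hdec]; exact diag_of_conj _ hV
  have hU : IsOrthoMat (Vhᵀ * W) := ortho_mul hVt hW
  have hSd : Vhᵀ * S * Vh = (Vhᵀ * W) * Matrix.diagonal μ * (Vhᵀ * W)ᵀ := by
    rw [heq]
    simp only [Matrix.transpose_mul, Matrix.transpose_transpose, Matrix.mul_assoc]
  have hre := (hA2.2.2.2 μ xh hμ hmono hμnn hnn (Vhᵀ * W) hU).1
  refine ⟨hμnn, ?_, ?_⟩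
  · rw [← hA2.2.1 μ xh hμnn hnn]
    calc D (Matrix.diagonal μ) (Matrix.diagonal xh)
        ≤ D ((Vhᵀ * W) * Matrix.diagonal μ * (Vhᵀ * W)ᵀ) (Matrix.diagonal xh) := hre
      _ = D S Sh := by rw [hDeq, hShd, hSd]
  · rw [heq, frobSq_conj hW]

end S2A

/-- Proposition 2: equivalence of (P_Mat) and (P_Vec).
Under Assumption 2: (i) (P_Mat) is feasible iff (P_Vec) is feasible; (ii) if `x*` solves
(P_Vec) then `V̂ Diag(x*) V̂ᵀ` solves (P_Mat); (iii) if `Σ*` solves (P_Mat) then its vector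
of eigenvalues in nondecreasing order solves (P_Vec); (iv) the optimal values coincide. -/
theorem stmt_2 {p : ℕ}
    (D : Mat p → Mat p → EReal) (d : ℝ → ℝ → EReal)
    (Sh : Mat p) (xh : Fin p → ℝ) (Vh : Mat p) (ε : ℝ)
    (hSh : Sh.PosSemidef) (hmono : Monotone xh) (hnn : ∀ i, 0 ≤ xh i)
    (hV : IsOrthoMat Vh) (hdec : Sh = Vh * Matrix.diagonal xh * Vhᵀ)
    (hε : 0 < ε)
    (hDbasic : DivergenceBasic D)
    (hA2 : Assumption2 D d) :
    ((∃ S : Mat p, Feas D Sh ε S) ↔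
      (∃ x : Fin p → ℝ, (∀ i, 0 ≤ x i) ∧ (∑ i, d (x i) (xh i)) ≤ (ε : EReal))) ∧
    (∀ x : Fin p → ℝ, IsPVecSol d xh ε x →
      IsPMatSol D Sh ε (Vh * Matrix.diagonal x * Vhᵀ)) ∧
    (∀ S : Mat p, IsPMatSol D Sh ε S →
      ∀ (μ : Fin p → ℝ) (W : Mat p), Monotone μ → IsOrthoMat W →
        S = W * Matrix.diagonal μ * Wᵀ → IsPVecSol d xh ε μ) ∧
    ((⨅ S : {S : Mat p // Feas D Sh ε S}, (frobSq S.1 : EReal)) =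
      ⨅ x : {x : Fin p → ℝ // (∀ i, 0 ≤ x i) ∧ (∑ i, d (x i) (xh i)) ≤ (ε : EReal)},
        ((∑ i, (x.1 i) ^ 2 : ℝ) : EReal)) := by
  have hAval : ∀ x : Fin p → ℝ, (∀ i, 0 ≤ x i) →
      D (Vh * Matrix.diagonal x * Vhᵀ) Sh = ∑ i, d (x i) (xh i) :=
    fun x hx => S2A.vecToMat D d Sh xh Vh hnn hV hdec hA2 x hx
  have hAfeas : ∀ x : Fin p → ℝ, (∀ i, 0 ≤ x i) → (∑ i, d (x i) (xh i)) ≤ (ε : EReal) →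
      Feas D Sh ε (Vh * Matrix.diagonal x * Vhᵀ) := by
    intro x hx hxe
    exact ⟨S2A.conj_psd Vh hx, by rw [hAval x hx]; exact hxe⟩
  have hB : ∀ S : Mat p, S.PosSemidef → ∀ (μ : Fin p → ℝ) (W : Mat p),
      Monotone μ → IsOrthoMat W → S = W * Matrix.diagonal μ * Wᵀ →
      (∀ i, 0 ≤ μ i) ∧ (∑ i, d (μ i) (xh i)) ≤ D S Sh ∧ ∑ i, μ i ^ 2 = frobSq S :=
    fun S hS μ W hμ hW heq =>
      S2A.matToVec D d Sh xh Vh hSh hmono hnn hV hdec hA2 hS hμ hW heq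
  refine ⟨?_, ?_, ?_, ?_⟩
  · constructor
    · rintro ⟨S, hSp, hSe⟩
      obtain ⟨μ, W, hμ, hW, heq⟩ := S2A.spectral hSp
      obtain ⟨h1, h2, _⟩ := hB S hSp μ W hμ hW heq
      exact ⟨μ, h1, le_trans h2 hSe⟩
    · rintro ⟨x, hx, hxe⟩
      exact ⟨_, hAfeas x hx hxe⟩
  · rintro x ⟨hx, hxe, hopt⟩
    refine ⟨hAfeas x hx hxe, ?_⟩
    intro T hT
    obtain ⟨μ, W, hμ, hW, heq⟩ := S2A.spectral hT.1
    obtain ⟨h1, h2, h3⟩ := hB T hT.1 μ W hμ hW heq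
    rw [S2A.frobSq_conj hV x, ← h3]
    exact hopt μ h1 (le_trans h2 hT.2)
  · rintro S ⟨hSf, hSopt⟩ μ W hμ hW heq
    obtain ⟨h1, h2, h3⟩ := hB S hSf.1 μ W hμ hW heq
    refine ⟨h1, le_trans h2 hSf.2, ?_⟩
    intro y hy hye
    rw [h3]
    have := hSopt _ (hAfeas y hy hye)
    rwa [S2A.frobSq_conj hV y] at this
  · apply le_antisymm
    · refine le_iInf fun x => ?_
      refine iInf_le_of_le ⟨Vh * Matrix.diagonal x.1 * Vhᵀ, hAfeas x.1 x.2.1 x.2.2⟩ ?_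
      exact le_of_eq (congrArg _ (S2A.frobSq_conj hV x.1))
    · refine le_iInf fun S => ?_
      obtain ⟨μ, W, hμ, hW, heq⟩ := S2A.spectral S.2.1
      obtain ⟨h1, h2, h3⟩ := hB S.1 S.2.1 μ W hμ hW heq
      refine iInf_le_of_le ⟨μ, h1, le_trans h2 S.2.2⟩ ?_
      exact le_of_eq (congrArg _ h3)
end
end

section
/- Suppose the divergence D satisfies Assumptions 2, 3 and 4. Then problem (P_Vec) admits a unique optimal solution x*, whose components are x*_i = s(γ*, x̂_i) for i = 1,…,p, where γ* is the unique positive root of the equation Σ_{i=1}^p d(s(γ, x̂_i), x̂_i) − ε = 0. Moreover 0 < x*_i < x̂_i whenever x̂_i > 0, and x*_i = 0 whenever x̂_i = 0. -/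
open Matrix Set Filter MeasureTheory
open scoped BigOperators Classical

noncomputable section

lemma myEReal_sum_ne_top {ι : Type*} (s : Finset ι) (f : ι → EReal)
    (h : ∀ i ∈ s, f i ≠ ⊤) : ∑ i ∈ s, f i ≠ ⊤ := by
  classical
  induction s using Finset.cons_induction with
  | empty => simp
  | cons a s ha ih =>
    rw [Finset.sum_cons]
    exact (EReal.add_lt_top (h a (Finset.mem_cons_self a s))
      (ih fun i hi => h i (Finset.mem_cons.2 (Or.inr hi)))).ne

lemma myEReal_sum_coe {ι : Type*} (s : Finset ι) (g : ι → ℝ) :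
    (∑ i ∈ s, ((g i : ℝ) : EReal)) = ((∑ i ∈ s, g i : ℝ) : EReal) := by
  classical
  induction s using Finset.cons_induction with
  | empty => simp
  | cons a s ha ih => rw [Finset.sum_cons, Finset.sum_cons, EReal.coe_add, ih]

lemma myEReal_sum_toReal {ι : Type*} (s : Finset ι) (f : ι → EReal)
    (h : ∀ i ∈ s, f i ≠ ⊤) (h2 : ∀ i ∈ s, f i ≠ ⊥) :
    ∑ i ∈ s, f i = ((∑ i ∈ s, (f i).toReal : ℝ) : EReal) := by
  rw [← myEReal_sum_coe]
  exact Finset.sum_congr rfl fun i hi => (EReal.coe_toReal (h i hi) (h2 i hi)).symm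

lemma myEReal_toReal_nonneg {x : EReal} (h : 0 ≤ x) : 0 ≤ x.toReal := by
  induction x using EReal.rec with
  | bot => simp at h
  | coe r => rw [EReal.toReal_coe]; exact_mod_cast h
  | top => simp

/-- gradient inequality for convex functions -/
lemma myGradIneq {S : Set ℝ} {f : ℝ → ℝ} {f' : ℝ → ℝ} (hconv : ConvexOn ℝ S f)
    {σ a : ℝ} (hσ : σ ∈ S) (ha : a ∈ S) (hder : HasDerivAt f (f' σ) σ) :
    f σ + f' σ * (a - σ) ≤ f a := by
  rcases lt_trichotomy a σ with h | h | h
  · have := hconv.slope_le_of_hasDerivAt ha hσ h hder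
    rw [slope_def_field] at this
    have hd : σ - a > 0 := by linarith
    rw [div_le_iff₀ hd] at this
    nlinarith
  · simp [h]
  · have := hconv.le_slope_of_hasDerivAt hσ ha h hder
    rw [slope_def_field] at this
    have hd : a - σ > 0 := by linarith
    rw [le_div_iff₀ hd] at this
    nlinarith

section OneVar
variable {b : ℝ} {f g₁ : ℝ → ℝ}

lemma myD1Neg (hb : 0 < b) (hconv : ConvexOn ℝ (Ioc 0 b) f)
    (hder : ∀ a, 0 < a → HasDerivAt f (g₁ a) a) (hfb : f b = 0)
    (hfpos : ∀ a ∈ Ioo 0 b, 0 < f a) {a : ℝ} (ha : a ∈ Ioo 0 b) : g₁ a < 0 := by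
  have h := hconv.le_slope_of_hasDerivAt (by constructor <;> [exact ha.1; exact ha.2.le])
    (by constructor <;> [exact hb; exact le_rfl]) ha.2 (hder a ha.1)
  rw [slope_def_field, hfb] at h
  have h2 : (0 - f a) / (b - a) < 0 := by
    apply div_neg_of_neg_of_pos
    · have := hfpos a ha; linarith
    · linarith [ha.2]
  linarith

lemma myD1Mono (hconv : ConvexOn ℝ (Ioc 0 b) f)
    (hder : ∀ a, 0 < a → HasDerivAt f (g₁ a) a) :
    MonotoneOn g₁ (Ioc 0 b) := by
  intro x hx y hy hxy
  rcases eq_or_lt_of_le hxy with rfl | h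
  · exact le_rfl
  calc g₁ x ≤ slope f x y := hconv.le_slope_of_hasDerivAt hx hy h (hder x hx.1)
    _ ≤ g₁ y := hconv.slope_le_of_hasDerivAt hx hy h (hder y hy.1)

lemma myD1AtB (hb : 0 < b) (hder : ∀ a, 0 < a → HasDerivAt f (g₁ a) a) (hfb : f b = 0)
    (hfnn : ∀ a, 0 < a → 0 ≤ f a) : g₁ b = 0 := by
  have hmin : IsLocalMin f b := by
    have hev : ∀ᶠ a in nhds b, 0 < a := eventually_gt_nhds hb
    filter_upwards [hev] with a ha
    rw [hfb]; exact hfnn a ha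
  exact hmin.hasDerivAt_eq_zero (hder b hb)

lemma myRoot (hb : 0 < b) {γ : ℝ} (hγ : 0 < γ)
    (hcont : ∀ a, 0 < a → ContinuousAt g₁ a)
    (hd1b : g₁ b = 0) (hd1neg : ∀ a ∈ Ioo 0 b, g₁ a < 0)
    (hmono : MonotoneOn g₁ (Ioc 0 b)) :
    ∃ a ∈ Ioo 0 b, 2 * a + γ * g₁ a = 0 := by
  set a₀ : ℝ := b / 2 with ha₀
  have ha₀m : a₀ ∈ Ioo 0 b := ⟨by linarith, by linarith⟩
  have hneg : g₁ a₀ < 0 := hd1neg a₀ ha₀m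
  set aL : ℝ := min a₀ (γ * (-g₁ a₀) / 4) with haL
  have haLpos : 0 < aL := lt_min ha₀m.1 (by nlinarith)
  have haLa₀ : aL ≤ a₀ := min_le_left _ _
  have haLb : aL < b := lt_of_le_of_lt haLa₀ ha₀m.2
  have hg : ContinuousOn (fun a => 2 * a + γ * g₁ a) (Icc aL b) := by
    intro x hx
    exact ((continuous_const.mul continuous_id).continuousAt.add
      ((hcont x (lt_of_lt_of_le haLpos hx.1)).const_smul γ)).continuousWithinAt
  have hL : 2 * aL + γ * g₁ aL < 0 := by
    have h1 : g₁ aL ≤ g₁ a₀ := hmono ⟨haLpos, le_of_lt haLb⟩ ⟨ha₀m.1, ha₀m.2.le⟩ haLa₀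
    have h2 : aL ≤ γ * (-g₁ a₀) / 4 := min_le_right _ _
    nlinarith
  have hR : 0 < 2 * b + γ * g₁ b := by rw [hd1b]; linarith
  have := intermediate_value_Icc (le_of_lt haLb) hg
  have h0 : (0:ℝ) ∈ Icc (2 * aL + γ * g₁ aL) (2 * b + γ * g₁ b) := ⟨hL.le, hR.le⟩
  obtain ⟨a, ha, heq⟩ := this h0
  refine ⟨a, ⟨lt_of_lt_of_le haLpos ha.1, lt_of_le_of_ne ha.2 ?_⟩, heq⟩
  rintro rfl
  simp only at heq
  rw [heq] at hR; exact lt_irrefl 0 hR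

end OneVar

section SCont
variable {b : ℝ} {g₁ t : ℝ → ℝ}

lemma mySCont (hb : 0 < b)
    (hcont : ∀ a, 0 < a → ContinuousAt g₁ a)
    (hmono : MonotoneOn g₁ (Ioc 0 b))
    (hsmem : ∀ γ, 0 < γ → t γ ∈ Ioo 0 b)
    (hseq : ∀ γ, 0 < γ → 2 * t γ + γ * g₁ (t γ) = 0)
    (huniq : ∀ γ, 0 < γ → ∀ a, 0 ≤ a → 2 * a + γ * g₁ a = 0 → a = t γ)
    {γ₀ : ℝ} (hγ₀ : 0 < γ₀) : ContinuousAt t γ₀ := by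
  rw [Metric.continuousAt_iff]
  intro e he
  set σ := t γ₀ with hσ
  have hσm : σ ∈ Ioo 0 b := hsmem γ₀ hγ₀
  set δ' : ℝ := min (e / 2) (min (σ / 2) ((b - σ) / 2)) with hδ'
  have hδ'pos : 0 < δ' := by
    apply lt_min (by linarith); apply lt_min
    · have := hσm.1; linarith
    · have := hσm.2; linarith
  have hδ'σ : δ' ≤ σ / 2 := le_trans (min_le_right _ _) (min_le_left _ _)
  have hδ'b : δ' ≤ (b - σ) / 2 := le_trans (min_le_right _ _) (min_le_right _ _)
  have hδ'e : δ' ≤ e / 2 := min_le_left _ _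
  set aL : ℝ := σ - δ' with haL
  set aR : ℝ := σ + δ' with haR
  have haLpos : 0 < aL := by have := hσm.1; simp only [haL]; linarith
  have haRb : aR < b := by have := hσm.2; simp only [haR]; linarith
  have haLm : aL ∈ Ioc 0 b := ⟨haLpos, by linarith⟩
  have haRm : aR ∈ Ioc 0 b := ⟨by linarith, haRb.le⟩
  have hσIoc : σ ∈ Ioc 0 b := ⟨hσm.1, hσm.2.le⟩
  have hgσ : 2 * σ + γ₀ * g₁ σ = 0 := hseq γ₀ hγ₀
  have hgL : 2 * aL + γ₀ * g₁ aL < 0 := by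
    have h1 : g₁ aL ≤ g₁ σ := hmono haLm hσIoc (by linarith)
    nlinarith
  have hgR : 0 < 2 * aR + γ₀ * g₁ aR := by
    have h1 : g₁ σ ≤ g₁ aR := hmono hσIoc haRm (by linarith)
    nlinarith
  set δγ : ℝ := min (γ₀ / 2)
    (min ((-(2 * aL + γ₀ * g₁ aL)) / (|g₁ aL| + 1)) ((2 * aR + γ₀ * g₁ aR) / (|g₁ aR| + 1)))
    with hδγ
  have habsL : 0 < |g₁ aL| + 1 := by positivity
  have habsR : 0 < |g₁ aR| + 1 := by positivity
  have hδγpos : 0 < δγ := by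
    apply lt_min (by linarith); apply lt_min
    · apply div_pos (by linarith) habsL
    · apply div_pos hgR habsR
  refine ⟨δγ, hδγpos, ?_⟩
  intro γ hdist
  rw [Real.dist_eq] at hdist
  have hγpos : 0 < γ := by
    have := abs_lt.1 hdist
    have h2 : δγ ≤ γ₀ / 2 := min_le_left _ _
    linarith [this.1]
  have habs1 : (γ - γ₀) * g₁ aL ≤ |γ - γ₀| * |g₁ aL| := by
    calc (γ - γ₀) * g₁ aL ≤ |(γ - γ₀) * g₁ aL| := le_abs_self _
      _ = |γ - γ₀| * |g₁ aL| := abs_mul _ _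
  have habs2 : -((γ - γ₀) * g₁ aR) ≤ |γ - γ₀| * |g₁ aR| := by
    calc -((γ - γ₀) * g₁ aR) ≤ |(γ - γ₀) * g₁ aR| := neg_le_abs _
      _ = |γ - γ₀| * |g₁ aR| := abs_mul _ _
  have hdL : |γ - γ₀| * (|g₁ aL| + 1) < -(2 * aL + γ₀ * g₁ aL) := by
    have h2 : δγ ≤ (-(2 * aL + γ₀ * g₁ aL)) / (|g₁ aL| + 1) :=
      le_trans (min_le_right _ _) (min_le_left _ _)
    have := (lt_div_iff₀ habsL).1 (lt_of_lt_of_le hdist h2)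
    linarith
  have hdR : |γ - γ₀| * (|g₁ aR| + 1) < 2 * aR + γ₀ * g₁ aR := by
    have h2 : δγ ≤ (2 * aR + γ₀ * g₁ aR) / (|g₁ aR| + 1) :=
      le_trans (min_le_right _ _) (min_le_right _ _)
    have := (lt_div_iff₀ habsR).1 (lt_of_lt_of_le hdist h2)
    linarith
  have habsnn : 0 ≤ |γ - γ₀| := abs_nonneg _
  have hL : 2 * aL + γ * g₁ aL < 0 := by nlinarith [abs_nonneg (g₁ aL)]
  have hR : 0 < 2 * aR + γ * g₁ aR := by nlinarith [abs_nonneg (g₁ aR)]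
  have hcontg : ContinuousOn (fun a => 2 * a + γ * g₁ a) (Icc aL aR) := by
    intro x hx
    exact ((continuous_const.mul continuous_id).continuousAt.add
      ((hcont x (lt_of_lt_of_le haLpos hx.1)).const_smul γ)).continuousWithinAt
  have hsub := intermediate_value_Icc (by linarith : aL ≤ aR) hcontg
  obtain ⟨a, ham, heq⟩ := hsub ⟨hL.le, hR.le⟩
  simp only at heq
  have ha' : a = t γ := huniq γ hγpos a (le_of_lt (lt_of_lt_of_le haLpos ham.1)) heq
  rw [Real.dist_eq, ← ha']
  have : |a - σ| ≤ δ' := by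
    rw [abs_le]
    constructor
    · simp only [haL] at ham; linarith [ham.1]
    · simp only [haR] at ham; linarith [ham.2]
  linarith

lemma mySTendstoTop (hb : 0 < b)
    (hmono : MonotoneOn g₁ (Ioc 0 b))
    (hd1neg : ∀ a ∈ Ioo 0 b, g₁ a < 0)
    (hsmem : ∀ γ, 0 < γ → t γ ∈ Ioo 0 b)
    (hseq : ∀ γ, 0 < γ → 2 * t γ + γ * g₁ (t γ) = 0) :
    Tendsto t atTop (nhds b) := by
  rw [Metric.tendsto_atTop]
  intro e he
  set a₀ : ℝ := max (b - e / 2) (b / 2) with ha₀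
  have ha₀m : a₀ ∈ Ioo 0 b := by
    constructor
    · exact lt_of_lt_of_le (by linarith) (le_max_right _ _)
    · apply max_lt (by linarith) (by linarith)
  have hneg : g₁ a₀ < 0 := hd1neg a₀ ha₀m
  refine ⟨2 * b / (-g₁ a₀) + 1, ?_⟩
  intro γ hγ
  have hΓpos : 0 < 2 * b / (-g₁ a₀) := by
    apply div_pos (by linarith) (by linarith)
  have hγpos : 0 < γ := by linarith
  have hγbig : 2 * b < γ * (-g₁ a₀) := by
    have := (div_lt_iff₀ (by linarith : 0 < -g₁ a₀)).1 (by linarith : 2 * b / (-g₁ a₀) < γ)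
    linarith
  have hmem := hsmem γ hγpos
  have hgt : a₀ < t γ := by
    by_contra hle
    push_neg at hle
    have h1 : g₁ (t γ) ≤ g₁ a₀ := hmono ⟨hmem.1, hmem.2.le⟩ ⟨ha₀m.1, ha₀m.2.le⟩ hle
    have h2 := hseq γ hγpos
    nlinarith [hmem.2]
  rw [Real.dist_eq, abs_lt]
  have h3 : b - a₀ ≤ e / 2 := by
    have := le_max_left (b - e / 2) (b / 2)
    simp only [ha₀]; linarith
  constructor
  · simp only [ha₀] at hgt h3 ⊢; linarith
  · linarith [hmem.2]

lemma mySTendstoZero (hb : 0 < b)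
    (hmono : MonotoneOn g₁ (Ioc 0 b))
    (hd1neg : ∀ a ∈ Ioo 0 b, g₁ a < 0)
    (hsmem : ∀ γ, 0 < γ → t γ ∈ Ioo 0 b)
    (hseq : ∀ γ, 0 < γ → 2 * t γ + γ * g₁ (t γ) = 0) :
    Tendsto t (nhdsWithin 0 (Ioi 0)) (nhds 0) := by
  rw [Metric.tendsto_nhdsWithin_nhds]
  intro e he
  set a₀ : ℝ := min (e / 2) (b / 2) with ha₀
  have ha₀m : a₀ ∈ Ioo 0 b := by
    constructor
    · apply lt_min (by linarith) (by linarith)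
    · exact lt_of_le_of_lt (min_le_right _ _) (by linarith)
  have hneg : g₁ a₀ < 0 := hd1neg a₀ ha₀m
  refine ⟨2 * a₀ / (-g₁ a₀), div_pos (by linarith [ha₀m.1]) (by linarith), ?_⟩
  intro γ hγmem hdist
  rw [Real.dist_eq, sub_zero] at hdist
  have hγpos : 0 < γ := hγmem
  have hγsmall : γ * (-g₁ a₀) < 2 * a₀ := by
    have h1 : γ < 2 * a₀ / (-g₁ a₀) := lt_of_le_of_lt (le_abs_self _) hdist
    have := (lt_div_iff₀ (by linarith : 0 < -g₁ a₀)).1 h1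
    linarith
  have hmem := hsmem γ hγpos
  have hlt : t γ < a₀ := by
    by_contra hle
    push_neg at hle
    have h1 : g₁ a₀ ≤ g₁ (t γ) := hmono ⟨ha₀m.1, ha₀m.2.le⟩ ⟨hmem.1, hmem.2.le⟩ hle
    have h2 := hseq γ hγpos
    nlinarith [ha₀m.1]
  rw [Real.dist_eq, sub_zero, abs_of_pos hmem.1]
  have : a₀ ≤ e / 2 := min_le_left _ _
  linarith

/-- Proposition 3: solution of (P_Vec).
Under Assumptions 2, 3 and 4, problem (P_Vec) has a unique optimal solution given by
`x*ᵢ = s(γ*, x̂ᵢ)` where `γ*` is the unique positive root of `Σᵢ d(s(γ,x̂ᵢ),x̂ᵢ) = ε`;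
moreover `0 < x*ᵢ < x̂ᵢ` whenever `x̂ᵢ > 0` and `x*ᵢ = 0` whenever `x̂ᵢ = 0`. -/
theorem stmt_3 {p : ℕ}
    (D : Mat p → Mat p → EReal) (d : ℝ → ℝ → EReal) (d₁ d₂ s : ℝ → ℝ → ℝ)
    (xh : Fin p → ℝ) (ε : ℝ)
    (hmono : Monotone xh) (hnn : ∀ i, 0 ≤ xh i)
    (hDbasic : DivergenceBasic D)
    (hA2 : Assumption2 D d)
    (hA3 : Assumption3 d xh ε)
    (hA4 : Assumption4 d d₁ d₂)
    (hs : EigenMapSpec d₁ s) :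
    (∃! γ : ℝ, 0 < γ ∧ (∑ i, d (s γ (xh i)) (xh i)) = (ε : EReal)) ∧
    (∀ γs : ℝ, 0 < γs → (∑ i, d (s γs (xh i)) (xh i)) = (ε : EReal) →
      (IsPVecSol d xh ε (fun i => s γs (xh i)) ∧
        ∀ x : Fin p → ℝ, IsPVecSol d xh ε x → x = fun i => s γs (xh i)) ∧
      ∀ i, (0 < xh i → 0 < s γs (xh i) ∧ s γs (xh i) < xh i) ∧
           (xh i = 0 → s γs (xh i) = 0)) := by
  classical
  obtain ⟨hDnn, hDzero⟩ := hDbasic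
  obtain ⟨-, hspec, hdcontI, -⟩ := hA2
  obtain ⟨hA3a, hεpos, hεlt⟩ := hA3
  obtain ⟨hfin, hd1der, hd2der, -, hconvE⟩ := hA4
  obtain ⟨hs0, hsp⟩ := hs
  have hp : 0 < p := by
    rcases Nat.eq_zero_or_pos p with h | h
    · subst h
      simp only [Finset.univ_eq_empty, Finset.sum_empty] at hεlt
      have : ε < 0 := by exact_mod_cast hεlt
      linarith
    · exact h
  set i₀ : Fin p := ⟨0, hp⟩ with hi₀
  -- basic generator facts
  have key_zero : ∀ c : ℝ, 0 ≤ c → d c c ≠ ⊤ → d c c = 0 := by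
    intro c hc hne
    have hx : ∀ i : Fin p, 0 ≤ (fun _ : Fin p => c) i := fun _ => hc
    have hEq := hspec (fun _ => c) (fun _ => c) hx hx
    beta_reduce at hEq
    have hfinD : D (Matrix.diagonal fun _ => c) (Matrix.diagonal fun _ => c) ≠ ⊤ := by
      rw [hEq]; exact myEReal_sum_ne_top _ _ fun i _ => hne
    have hPSD : (Matrix.diagonal fun _ : Fin p => c).PosSemidef :=
      Matrix.PosSemidef.diagonal (by intro i; exact hc)
    have h0 := (hDzero _ _ hPSD hPSD hfinD).2 rfl
    rw [hEq] at h0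
    by_cases hbot : d c c = ⊥
    · rw [hbot, ← Finset.add_sum_erase _ _ (Finset.mem_univ i₀), EReal.bot_add] at h0
      exact absurd h0 (by simp)
    · have hcoe := EReal.coe_toReal hne hbot
      rw [← hcoe] at h0 ⊢
      rw [myEReal_sum_coe] at h0
      have hcard : (∑ _i : Fin p, (d c c).toReal) = p * (d c c).toReal := by
        rw [Finset.sum_const, Finset.card_univ, Fintype.card_fin, nsmul_eq_mul]
      rw [hcard] at h0
      have hpr : (p : ℝ) * (d c c).toReal = 0 := by exact_mod_cast h0
      have hr : (d c c).toReal = 0 := by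
        rcases mul_eq_zero.1 hpr with h | h
        · exact absurd h (Nat.cast_ne_zero.2 hp.ne')
        · exact h
      rw [hr]; simp
  have key_nonneg : ∀ a c : ℝ, 0 ≤ a → 0 ≤ c → d c c = 0 → 0 ≤ d a c := by
    intro a c ha hc hcc
    set x : Fin p → ℝ := Function.update (fun _ => c) i₀ a with hxdef
    have hx : ∀ i, 0 ≤ x i := by
      intro i
      rcases eq_or_ne i i₀ with h | h
      · rw [hxdef, h]; simp only [Function.update_self]; exact ha
      · rw [hxdef]; simp only [Function.update_of_ne h]; exact hc
    have hEq := hspec x (fun _ => c) hx (fun _ => hc)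
    have hsum : (∑ i, d (x i) ((fun _ : Fin p => c) i)) = d a c := by
      rw [Finset.sum_eq_single i₀]
      · rw [hxdef]; simp only [Function.update_self]
      · intro j _ hj
        rw [hxdef]; simp only [Function.update_of_ne hj]; exact hcc
      · intro h; exact absurd (Finset.mem_univ i₀) h
    have hD := hDnn (Matrix.diagonal x) (Matrix.diagonal fun _ => c)
    rw [hEq, hsum] at hD
    exact hD
  have key_eq : ∀ a c : ℝ, 0 ≤ a → 0 ≤ c → d c c = 0 → d a c ≠ ⊤ → d a c = 0 → a = c := by
    intro a c ha hc hcc hne h0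
    set x : Fin p → ℝ := Function.update (fun _ => c) i₀ a with hxdef
    have hx : ∀ i, 0 ≤ x i := by
      intro i
      rcases eq_or_ne i i₀ with h | h
      · rw [hxdef, h]; simp only [Function.update_self]; exact ha
      · rw [hxdef]; simp only [Function.update_of_ne h]; exact hc
    have hEq := hspec x (fun _ => c) hx (fun _ => hc)
    have hsum : (∑ i, d (x i) ((fun _ : Fin p => c) i)) = d a c := by
      rw [Finset.sum_eq_single i₀]
      · rw [hxdef]; simp only [Function.update_self]
      · intro j _ hj
        rw [hxdef]; simp only [Function.update_of_ne hj]; exact hcc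
      · intro h; exact absurd (Finset.mem_univ i₀) h
    have hPSDx : (Matrix.diagonal x).PosSemidef :=
      Matrix.PosSemidef.diagonal (by intro i; exact hx i)
    have hPSDc : (Matrix.diagonal fun _ : Fin p => c).PosSemidef :=
      Matrix.PosSemidef.diagonal (by intro i; exact hc)
    have hfinD : D (Matrix.diagonal x) (Matrix.diagonal fun _ => c) ≠ ⊤ := by
      rw [hEq, hsum, h0]; simp
    have hDeq : D (Matrix.diagonal x) (Matrix.diagonal fun _ => c) = 0 := by
      rw [hEq, hsum]; exact h0
    have hmat := (hDzero _ _ hPSDx hPSDc hfinD).1 hDeq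
    have hcf := congrFun (congrFun hmat i₀) i₀
    rw [Matrix.diagonal_apply_eq, Matrix.diagonal_apply_eq] at hcf
    rw [hxdef] at hcf
    simpa only [Function.update_self] using hcf
  have hex : ∃ i, 0 < xh i := by
    by_contra hno
    push_neg at hno
    have hz : ∀ i, xh i = 0 := fun i => le_antisymm (hno i) (hnn i)
    have hd00 : d 0 0 = 0 := by
      have := hA3a i₀
      rw [hz i₀] at this
      exact key_zero 0 le_rfl this
    have hsum0 : (∑ i, d 0 (xh i)) = 0 := by
      rw [Finset.sum_congr rfl fun i _ => by rw [hz i, hd00]]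
      simp
    rw [hsum0] at hεlt
    have : ε < 0 := by exact_mod_cast hεlt
    linarith
  have hdbb : ∀ b : ℝ, 0 < b → d b b = 0 := fun b hb => key_zero b hb.le (hfin b b hb hb)
  have hdc0 : ∀ i, xh i = 0 → d 0 0 = 0 := by
    intro i hi
    have := hA3a i
    rw [hi] at this
    exact key_zero 0 le_rfl this
  have hnnb : ∀ b : ℝ, 0 < b → ∀ a : ℝ, 0 ≤ a → 0 ≤ d a b :=
    fun b hb a ha => key_nonneg a b ha hb.le (hdbb b hb)
  have hnebot : ∀ b : ℝ, 0 < b → ∀ a : ℝ, 0 ≤ a → d a b ≠ ⊥ := by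
    intro b hb a ha h
    have := hnnb b hb a ha
    rw [h] at this
    simp at this
  have hdpos : ∀ b : ℝ, 0 < b → ∀ a : ℝ, 0 ≤ a → a ≠ b → 0 < d a b := by
    intro b hb a ha hne
    rcases eq_or_lt_of_le (hnnb b hb a ha) with h | h
    · exfalso
      exact hne (key_eq a b ha hb.le (hdbb b hb) (by rw [← h]; simp) h.symm)
    · exact h
  -- real function facts
  have hfbb : ∀ b : ℝ, 0 < b → ((d b b).toReal : ℝ) = 0 := by
    intro b hb; rw [hdbb b hb]; simp
  have hfnn : ∀ b : ℝ, 0 < b → ∀ a : ℝ, 0 ≤ a → 0 ≤ (d a b).toReal :=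
    fun b hb a ha => myEReal_toReal_nonneg (hnnb b hb a ha)
  have hfpos : ∀ b : ℝ, 0 < b → ∀ a, a ∈ Ioo (0:ℝ) b → 0 < (d a b).toReal := by
    intro b hb a ha
    have h1 : 0 < d a b := hdpos b hb a ha.1.le (ne_of_lt ha.2)
    have h2 : d a b ≠ ⊤ := hfin a b ha.1 hb
    have h3 := EReal.coe_toReal h2 (hnebot b hb a ha.1.le)
    rw [← h3] at h1
    exact_mod_cast h1
  have hconvGen : ∀ b : ℝ, 0 < b → ∀ S : Set ℝ, S ⊆ Icc 0 b → Convex ℝ S →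
      (∀ z ∈ S, d z b ≠ ⊤) → ConvexOn ℝ S (fun a => (d a b).toReal) := by
    intro b hb S hSsub hSconv hSfin
    refine ⟨hSconv, ?_⟩
    intro x hx y hy tx ty htx hty hsum
    simp only [smul_eq_mul]
    have hxm := hSsub hx
    have hym := hSsub hy
    have hzS : tx * x + ty * y ∈ S := by
      have := hSconv hx hy htx hty hsum
      simpa using this
    have hA := hconvE b hb x hxm y hym tx ⟨htx, by linarith⟩
    rw [show (1 - tx : ℝ) = ty by linarith] at hA
    have hfx := hSfin x hx
    have hfy := hSfin y hy
    have hfz := hSfin _ hzS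
    have hbx : d x b ≠ ⊥ := hnebot b hb x hxm.1
    have hby : d y b ≠ ⊥ := hnebot b hb y hym.1
    have hbz : d (tx * x + ty * y) b ≠ ⊥ := hnebot b hb _ (hSsub hzS).1
    have hcoe : d (tx * x + ty * y) b
        ≤ ((tx * (d x b).toReal + ty * (d y b).toReal : ℝ) : EReal) := by
      rw [EReal.coe_add, EReal.coe_mul, EReal.coe_mul,
        EReal.coe_toReal hfx hbx, EReal.coe_toReal hfy hby]
      exact hA
    have := EReal.toReal_le_toReal hcoe hbz (EReal.coe_ne_top _)
    rwa [EReal.toReal_coe] at this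
  have hconvIoc : ∀ b : ℝ, 0 < b → ConvexOn ℝ (Ioc 0 b) (fun a => (d a b).toReal) := by
    intro b hb
    exact hconvGen b hb _ Ioc_subset_Icc_self (convex_Ioc 0 b)
      (fun z hz => hfin z b hz.1 hb)
  have hconvIcc : ∀ b : ℝ, 0 < b → d 0 b ≠ ⊤ →
      ConvexOn ℝ (Icc 0 b) (fun a => (d a b).toReal) := by
    intro b hb h0
    refine hconvGen b hb _ subset_rfl (convex_Icc 0 b) ?_
    intro z hz
    rcases eq_or_lt_of_le hz.1 with h | h
    · rw [← h]; exact h0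
    · exact hfin z b h hb
  have hderf : ∀ b : ℝ, 0 < b → ∀ a : ℝ, 0 < a →
      HasDerivAt (fun t => (d t b).toReal) (d₁ a b) a := fun b hb a ha => hd1der a b ha hb
  have hd1neg : ∀ b : ℝ, 0 < b → ∀ a, a ∈ Ioo (0:ℝ) b → d₁ a b < 0 := by
    intro b hb a ha
    exact myD1Neg (g₁ := fun a => d₁ a b) hb (hconvIoc b hb) (hderf b hb) (hfbb b hb) (hfpos b hb) ha
  have hd1mono : ∀ b : ℝ, 0 < b → MonotoneOn (fun a => d₁ a b) (Ioc 0 b) :=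
    fun b hb => myD1Mono (g₁ := fun a => d₁ a b) (hconvIoc b hb) (hderf b hb)
  have hd1cont : ∀ b : ℝ, 0 < b → ∀ a : ℝ, 0 < a → ContinuousAt (fun a => d₁ a b) a :=
    fun b hb a ha => (hd2der a b ha hb).continuousAt
  have hd1bb : ∀ b : ℝ, 0 < b → d₁ b b = 0 := by
    intro b hb
    exact myD1AtB (g₁ := fun a => d₁ a b) hb (hderf b hb) (hfbb b hb) (fun a ha => hfnn b hb a ha.le)
  have hsmem : ∀ b : ℝ, 0 < b → ∀ γ : ℝ, 0 < γ → s γ b ∈ Ioo (0:ℝ) b := by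
    intro b hb γ hγ
    obtain ⟨a, ham, heq⟩ := myRoot hb hγ (hd1cont b hb) (hd1bb b hb) (hd1neg b hb)
      (hd1mono b hb)
    have := (hsp γ b hγ hb).2.2 a ham.1.le heq
    rwa [← this]
  have hseq : ∀ b : ℝ, 0 < b → ∀ γ : ℝ, 0 < γ → 2 * s γ b + γ * d₁ (s γ b) b = 0 :=
    fun b hb γ hγ => (hsp γ b hγ hb).2.1
  -- finiteness and nonnegativity of the terms at the candidate solution
  have hfinterm : ∀ γ : ℝ, 0 < γ → ∀ i,
      d (s γ (xh i)) (xh i) ≠ ⊤ ∧ 0 ≤ d (s γ (xh i)) (xh i) := by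
    intro γ hγ i
    rcases eq_or_lt_of_le (hnn i) with h0 | hpos
    · rw [← h0, hs0 γ 0 (Or.inr rfl), hdc0 i h0.symm]
      simp
    · have hm := hsmem (xh i) hpos γ hγ
      exact ⟨hfin _ _ hm.1 hpos, hnnb (xh i) hpos _ hm.1.le⟩
  have hFr_eq : ∀ γ : ℝ, 0 < γ →
      (∑ i, d (s γ (xh i)) (xh i))
        = ((∑ i, (d (s γ (xh i)) (xh i)).toReal : ℝ) : EReal) := by
    intro γ hγ
    exact myEReal_sum_toReal _ _ (fun i _ => (hfinterm γ hγ i).1)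
      (fun i _ => fun h => by have := (hfinterm γ hγ i).2; rw [h] at this; simp at this)
  -- the key per-coordinate inequality
  have hkey : ∀ γ : ℝ, 0 < γ → ∀ i, 0 < xh i → ∀ a, a ∈ Icc (0:ℝ) (xh i) →
      d a (xh i) ≠ ⊤ →
      (s γ (xh i))^2 + γ * ((d (s γ (xh i)) (xh i)).toReal - (d a (xh i)).toReal)
        + (a - s γ (xh i))^2 ≤ a^2 := by
    intro γ hγ i hbi a ham hfina
    have hσ := hsmem (xh i) hbi γ hγ
    have heq := hseq (xh i) hbi γ hγ
    have hgrad : (d (s γ (xh i)) (xh i)).toReal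
        + d₁ (s γ (xh i)) (xh i) * (a - s γ (xh i)) ≤ (d a (xh i)).toReal := by
      rcases eq_or_lt_of_le ham.1 with h0 | hapos
      · exact myGradIneq (f' := fun a => d₁ a (xh i))
          (hconvIcc (xh i) hbi (by rw [h0]; exact hfina))
          ⟨hσ.1.le, hσ.2.le⟩ ham (hderf (xh i) hbi _ hσ.1)
      · exact myGradIneq (f' := fun a => d₁ a (xh i)) (hconvIoc (xh i) hbi)
          ⟨hσ.1, hσ.2.le⟩ ⟨hapos, ham.2⟩ (hderf (xh i) hbi _ hσ.1)
    have hmul := mul_le_mul_of_nonneg_left hgrad hγ.le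
    rw [mul_add] at hmul
    have h3 : γ * (d₁ (s γ (xh i)) (xh i) * (a - s γ (xh i)))
        = -(2 * s γ (xh i)) * (a - s γ (xh i)) := by
      have h2 : γ * d₁ (s γ (xh i)) (xh i) = -(2 * s γ (xh i)) := by linarith
      calc γ * (d₁ (s γ (xh i)) (xh i) * (a - s γ (xh i)))
          = (γ * d₁ (s γ (xh i)) (xh i)) * (a - s γ (xh i)) := by ring
        _ = -(2 * s γ (xh i)) * (a - s γ (xh i)) := by rw [h2]
    rw [h3] at hmul
    nlinarith [hmul]
  -- the main optimality statement
  have main : ∀ γs : ℝ, 0 < γs → (∑ i, d (s γs (xh i)) (xh i)) = (ε : EReal) →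
      (IsPVecSol d xh ε (fun i => s γs (xh i)) ∧
        ∀ x : Fin p → ℝ, IsPVecSol d xh ε x → x = fun i => s γs (xh i)) ∧
      ∀ i, (0 < xh i → 0 < s γs (xh i) ∧ s γs (xh i) < xh i) ∧
           (xh i = 0 → s γs (xh i) = 0) := by
    intro γs hγs hroot
    have hrootR : (∑ i, (d (s γs (xh i)) (xh i)).toReal) = ε := by
      have h := hFr_eq γs hγs
      rw [h] at hroot
      exact_mod_cast hroot
    have hbounds : ∀ i, (0 < xh i → 0 < s γs (xh i) ∧ s γs (xh i) < xh i) ∧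
        (xh i = 0 → s γs (xh i) = 0) := by
      intro i
      exact ⟨fun hxi => ⟨(hsmem _ hxi γs hγs).1, (hsmem _ hxi γs hγs).2⟩,
        fun hxi => hs0 γs _ (Or.inr hxi)⟩
    have hxsnn : ∀ i, 0 ≤ s γs (xh i) := by
      intro i
      rcases eq_or_lt_of_le (hnn i) with h | h
      · exact le_of_eq ((hbounds i).2 h.symm).symm
      · exact ((hbounds i).1 h).1.le
    have hzeros : ∀ i, ¬ 0 < xh i → xh i = 0 := fun i h => le_antisymm (not_lt.1 h) (hnn i)
    have core : ∀ y : Fin p → ℝ, (∀ i, 0 ≤ y i) → (∑ i, d (y i) (xh i)) ≤ (ε : EReal) →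
        ((∑ i, (s γs (xh i))^2)
          + ∑ i, ((if 0 < xh i then min (y i) (xh i) else 0) - s γs (xh i))^2
          ≤ ∑ i, (if 0 < xh i then min (y i) (xh i) else 0)^2)
        ∧ (∀ i, (if 0 < xh i then min (y i) (xh i) else 0)^2 ≤ (y i)^2)
        ∧ (∀ i, (if 0 < xh i then min (y i) (xh i) else 0) ≤ y i)
        ∧ (∀ i, 0 ≤ (if 0 < xh i then min (y i) (xh i) else 0)) := by
      intro y hynn hyfeas
      have hy'nn : ∀ i, 0 ≤ (if 0 < xh i then min (y i) (xh i) else 0) := by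
        intro i; split
        · exact le_min (hynn i) (le_of_lt (by assumption))
        · exact le_rfl
      have hy'le : ∀ i, (if 0 < xh i then min (y i) (xh i) else 0) ≤ y i := by
        intro i; split
        · exact min_le_left _ _
        · exact hynn i
      have hy'd : ∀ i, d (if 0 < xh i then min (y i) (xh i) else 0) (xh i)
          ≤ d (y i) (xh i) := by
        intro i
        by_cases hxi : 0 < xh i
        · rw [if_pos hxi]
          rcases le_total (y i) (xh i) with hle | hle
          · rw [min_eq_left hle]
          · rw [min_eq_right hle, hdbb _ hxi]
            exact hnnb _ hxi _ (hynn i)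
        · rw [if_neg hxi, hzeros i hxi]
          have h00 : d 0 0 = 0 := hdc0 i (hzeros i hxi)
          rw [h00]
          exact key_nonneg (y i) 0 (hynn i) le_rfl h00
      have hy'sum : (∑ i, d (if 0 < xh i then min (y i) (xh i) else 0) (xh i)) ≤ (ε : EReal) :=
        le_trans (Finset.sum_le_sum fun i _ => hy'd i) hyfeas
      have hy'dnn : ∀ i, 0 ≤ d (if 0 < xh i then min (y i) (xh i) else 0) (xh i) := by
        intro i
        by_cases hxi : 0 < xh i
        · exact hnnb _ hxi _ (hy'nn i)
        · have h0 := hzeros i hxi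
          have hif : (if 0 < xh i then min (y i) (xh i) else 0) = 0 := if_neg hxi
          rw [hif, h0, hdc0 i h0]
      have hy'nebot : ∀ i, d (if 0 < xh i then min (y i) (xh i) else 0) (xh i) ≠ ⊥ := by
        intro i h
        have := hy'dnn i
        rw [h] at this
        simp at this
      have hy'fin : ∀ i, d (if 0 < xh i then min (y i) (xh i) else 0) (xh i) ≠ ⊤ := by
        intro i
        have hle : d (if 0 < xh i then min (y i) (xh i) else 0) (xh i) ≤ (ε : EReal) :=
          le_trans (Finset.single_le_sum (fun j _ => hy'dnn j) (Finset.mem_univ i)) hy'sum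
        exact ne_top_of_le_ne_top (EReal.coe_ne_top ε) hle
      have hy'real : (∑ i, (d (if 0 < xh i then min (y i) (xh i) else 0) (xh i)).toReal) ≤ ε := by
        have heq := myEReal_sum_toReal Finset.univ
          (fun i => d (if 0 < xh i then min (y i) (xh i) else 0) (xh i))
          (fun i _ => hy'fin i) (fun i _ => hy'nebot i)
        rw [heq] at hy'sum
        exact_mod_cast hy'sum
      have hcoord : ∀ i, (s γs (xh i))^2
          + γs * ((d (s γs (xh i)) (xh i)).toReal
            - (d (if 0 < xh i then min (y i) (xh i) else 0) (xh i)).toReal)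
          + ((if 0 < xh i then min (y i) (xh i) else 0) - s γs (xh i))^2
          ≤ (if 0 < xh i then min (y i) (xh i) else 0)^2 := by
        intro i
        by_cases hxi : 0 < xh i
        · refine hkey γs hγs i hxi _ ⟨hy'nn i, ?_⟩ (hy'fin i)
          rw [if_pos hxi]
          exact min_le_right _ _
        · have h0 := hzeros i hxi
          have hsz : s γs (xh i) = 0 := (hbounds i).2 h0
          rw [if_neg hxi, hsz, h0]
          simp
      have hsumineq := Finset.sum_le_sum (fun i (_ : i ∈ Finset.univ) => hcoord i)
      rw [Finset.sum_add_distrib, Finset.sum_add_distrib, ← Finset.mul_sum,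
        Finset.sum_sub_distrib, hrootR] at hsumineq
      have hmulnn : 0 ≤ γs * (ε
          - ∑ i, (d (if 0 < xh i then min (y i) (xh i) else 0) (xh i)).toReal) :=
        mul_nonneg hγs.le (by linarith)
      refine ⟨by linarith, fun i => pow_le_pow_left₀ (hy'nn i) (hy'le i) 2, hy'le, hy'nn⟩
    refine ⟨⟨⟨hxsnn, le_of_eq hroot, ?_⟩, ?_⟩, hbounds⟩
    · intro y hynn hyfeas
      obtain ⟨hmain, hsq, -, -⟩ := core y hynn hyfeas
      have h1 : (∑ i, (if 0 < xh i then min (y i) (xh i) else 0)^2) ≤ ∑ i, (y i)^2 :=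
        Finset.sum_le_sum fun i _ => hsq i
      have h2 : (0:ℝ) ≤ ∑ i, ((if 0 < xh i then min (y i) (xh i) else 0) - s γs (xh i))^2 :=
        Finset.sum_nonneg fun i _ => sq_nonneg _
      linarith
    · intro x hxsol
      obtain ⟨hxnn, hxfeas, hxopt⟩ := hxsol
      obtain ⟨hmain, hsq, hle', hnn'⟩ := core x hxnn hxfeas
      have h1 : (∑ i, (if 0 < xh i then min (x i) (xh i) else 0)^2) ≤ ∑ i, (x i)^2 :=
        Finset.sum_le_sum fun i _ => hsq i
      have h2nn : (0:ℝ) ≤ ∑ i, ((if 0 < xh i then min (x i) (xh i) else 0) - s γs (xh i))^2 :=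
        Finset.sum_nonneg fun i _ => sq_nonneg _
      have hx_le : (∑ i, (x i)^2) ≤ ∑ i, (s γs (xh i))^2 :=
        hxopt _ hxsnn (le_of_eq hroot)
      have hzero : (∑ i, ((if 0 < xh i then min (x i) (xh i) else 0) - s γs (xh i))^2) = 0 :=
        le_antisymm (by linarith) h2nn
      have hx'eq : ∀ i, (if 0 < xh i then min (x i) (xh i) else 0) = s γs (xh i) := by
        intro i
        have hz := (Finset.sum_eq_zero_iff_of_nonneg (fun i _ => sq_nonneg _)).1 hzero i
          (Finset.mem_univ i)
        have := pow_eq_zero_iff (two_ne_zero) |>.1 hz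
        exact sub_eq_zero.1 this
      have hsq_eq : (∑ i, (if 0 < xh i then min (x i) (xh i) else 0)^2) = ∑ i, (x i)^2 := by
        refine le_antisymm h1 ?_
        linarith
      have hptwise := (Finset.sum_eq_sum_iff_of_le (fun i (_ : i ∈ Finset.univ) => hsq i)).1
        hsq_eq
      funext i
      show x i = s γs (xh i)
      have hxx' : (if 0 < xh i then min (x i) (xh i) else 0) = x i := by
        have hii := (hptwise i (Finset.mem_univ i)).symm
        by_contra hne
        have hlt : (if 0 < xh i then min (x i) (xh i) else 0) < x i :=
          lt_of_le_of_ne (hle' i) hne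
        have hlt2 := pow_lt_pow_left₀ hlt (hnn' i) (two_ne_zero)
        rw [hii] at hlt2
        exact lt_irrefl _ hlt2
      rw [← hxx']
      exact hx'eq i
  refine ⟨?_, fun γs h1 h2 => main γs h1 h2⟩
  -- existence and uniqueness of the positive root
  have hscont : ∀ b : ℝ, 0 < b → ∀ γ₀ : ℝ, 0 < γ₀ → ContinuousAt (fun γ => s γ b) γ₀ := by
    intro b hb γ₀ hγ₀
    exact mySCont (g₁ := fun a => d₁ a b) hb (hd1cont b hb) (hd1mono b hb)
      (fun γ hγ => hsmem b hb γ hγ) (fun γ hγ => hseq b hb γ hγ)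
      (fun γ hγ a ha heq => (hsp γ b hγ hb).2.2 a ha heq) hγ₀
  have hstop : ∀ b : ℝ, 0 < b → Tendsto (fun γ => s γ b) atTop (nhds b) := by
    intro b hb
    exact mySTendstoTop (g₁ := fun a => d₁ a b) hb (hd1mono b hb) (hd1neg b hb)
      (fun γ hγ => hsmem b hb γ hγ) (fun γ hγ => hseq b hb γ hγ)
  have hszero : ∀ b : ℝ, 0 < b →
      Tendsto (fun γ => s γ b) (nhdsWithin 0 (Ioi 0)) (nhds 0) := by
    intro b hb
    exact mySTendstoZero (g₁ := fun a => d₁ a b) hb (hd1mono b hb) (hd1neg b hb)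
      (fun γ hγ => hsmem b hb γ hγ) (fun γ hγ => hseq b hb γ hγ)
  set Fr : ℝ → ℝ := fun γ => ∑ i, (d (s γ (xh i)) (xh i)).toReal with hFrdef
  have hconst0 : ∀ i, xh i = 0 →
      (fun γ => (d (s γ (xh i)) (xh i)).toReal) = fun _ : ℝ => (0:ℝ) := by
    intro i hi
    funext γ
    rw [hi, hs0 γ 0 (Or.inr rfl), hdc0 i hi]
    simp
  have hFrcont : ∀ γ₀ : ℝ, 0 < γ₀ → ContinuousAt Fr γ₀ := by
    intro γ₀ hγ₀
    have key : Tendsto (fun γ => ∑ i, (d (s γ (xh i)) (xh i)).toReal) (nhds γ₀)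
        (nhds (∑ i, (d (s γ₀ (xh i)) (xh i)).toReal)) := by
      apply tendsto_finset_sum
      intro i _
      rcases eq_or_lt_of_le (hnn i) with h | h
      · have h0 : xh i = 0 := h.symm
        have hv : (d (s γ₀ (xh i)) (xh i)).toReal = 0 := by
          rw [h0, hs0 γ₀ 0 (Or.inr rfl), hdc0 i h0]; simp
        rw [hconst0 i h0, hv]
        exact tendsto_const_nhds
      · have hc : ContinuousAt (fun a => (d a (xh i)).toReal) (s γ₀ (xh i)) :=
          (hd1der (s γ₀ (xh i)) (xh i) (hsmem (xh i) h γ₀ hγ₀).1 h).continuousAt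
        exact hc.tendsto.comp (hscont (xh i) h γ₀ hγ₀).tendsto
    exact key
  have hdtend : ∀ b : ℝ, 0 < b →
      Tendsto (fun γ => d (s γ b) b) (nhdsWithin 0 (Ioi 0)) (nhds (d 0 b)) := by
    intro b hb
    have h1 : Tendsto (fun γ => s γ b) (nhdsWithin 0 (Ioi 0)) (nhdsWithin 0 (Ici 0)) := by
      apply tendsto_nhdsWithin_of_tendsto_nhds_of_eventually_within _ (hszero b hb)
      filter_upwards [self_mem_nhdsWithin] with γ hγ
      exact (hsmem b hb γ hγ).1.le
    have h2 : ContinuousWithinAt (fun a => d a b) (Ici 0) 0 := (hdcontI b hb) 0 self_mem_Ici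
    exact h2.tendsto.comp h1
  have hγ0ex : ∃ γ0 : ℝ, 0 < γ0 ∧ ε < Fr γ0 := by
    by_cases hT : ∃ i, d 0 (xh i) = ⊤
    · obtain ⟨i, hi⟩ := hT
      have hbi : 0 < xh i := by
        rcases eq_or_lt_of_le (hnn i) with h | h
        · exfalso
          rw [← h] at hi
          rw [hdc0 i h.symm] at hi
          simp at hi
        · exact h
      have htop : Tendsto (fun γ => d (s γ (xh i)) (xh i)) (nhdsWithin 0 (Ioi 0)) (nhds ⊤) := by
        have := hdtend (xh i) hbi
        rwa [hi] at this
      have hev := (EReal.tendsto_nhds_top_iff_real.1 htop) ε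
      obtain ⟨γ0, h1, h2⟩ := (hev.and self_mem_nhdsWithin).exists
      refine ⟨γ0, h2, ?_⟩
      have hfinγ : d (s γ0 (xh i)) (xh i) ≠ ⊤ := (hfinterm γ0 h2 i).1
      have hbot : d (s γ0 (xh i)) (xh i) ≠ ⊥ := by
        intro hx
        have := (hfinterm γ0 h2 i).2
        rw [hx] at this
        simp at this
      have hlt : ε < (d (s γ0 (xh i)) (xh i)).toReal := by
        have hco := EReal.coe_toReal hfinγ hbot
        rw [← hco] at h1
        exact_mod_cast h1
      have hsingle : (d (s γ0 (xh i)) (xh i)).toReal ≤ Fr γ0 :=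
        Finset.single_le_sum (fun j _ => myEReal_toReal_nonneg (hfinterm γ0 h2 j).2)
          (Finset.mem_univ i)
      linarith
    · push_neg at hT
      have hnb : ∀ i, d 0 (xh i) ≠ ⊥ := by
        intro i hbot
        rcases eq_or_lt_of_le (hnn i) with h | h
        · rw [← h, hdc0 i h.symm] at hbot
          simp at hbot
        · have := hnnb (xh i) h 0 le_rfl
          rw [hbot] at this
          simp at this
      have hR : (ε:EReal) < ((∑ i, (d 0 (xh i)).toReal : ℝ) : EReal) := by
        rw [← myEReal_sum_toReal _ _ (fun i _ => hT i) (fun i _ => hnb i)]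
        exact hεlt
      have hRR : ε < ∑ i, (d 0 (xh i)).toReal := by exact_mod_cast hR
      have htends : Tendsto Fr (nhdsWithin 0 (Ioi 0)) (nhds (∑ i, (d 0 (xh i)).toReal)) := by
        apply tendsto_finset_sum
        intro i _
        rcases eq_or_lt_of_le (hnn i) with h | h
        · rw [hconst0 i h.symm]
          have hv : (d 0 (xh i)).toReal = 0 := by
            rw [← h, hdc0 i h.symm]; simp
          rw [hv]
          exact tendsto_const_nhds
        · exact (EReal.tendsto_toReal (hT i) (hnb i)).comp (hdtend (xh i) h)
      have hev := htends.eventually (eventually_gt_nhds hRR)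
      obtain ⟨γ0, h1, h2⟩ := (hev.and self_mem_nhdsWithin).exists
      exact ⟨γ0, h2, h1⟩
  have hγ1ex : ∃ γ1 : ℝ, 0 < γ1 ∧ Fr γ1 < ε := by
    have htop : Tendsto Fr atTop (nhds 0) := by
      have hz : (0:ℝ) = ∑ _i : Fin p, (0:ℝ) := by simp
      rw [hz]
      apply tendsto_finset_sum
      intro i _
      rcases eq_or_lt_of_le (hnn i) with h | h
      · rw [hconst0 i h.symm]
        exact tendsto_const_nhds
      · have hc : ContinuousAt (fun a => (d a (xh i)).toReal) (xh i) :=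
          (hd1der (xh i) (xh i) h h).continuousAt
        have hcc := hc.tendsto.comp (hstop (xh i) h)
        simpa [hdbb (xh i) h, Function.comp_def] using hcc
    have hev := htop.eventually (eventually_lt_nhds hεpos)
    obtain ⟨γ1, h1, h2⟩ := (hev.and (eventually_gt_atTop 0)).exists
    exact ⟨γ1, h2, h1⟩
  obtain ⟨γ0, hγ0pos, hγ0⟩ := hγ0ex
  obtain ⟨γ1, hγ1pos, hγ1⟩ := hγ1ex
  have hIoi : uIcc γ0 γ1 ⊆ Ioi (0:ℝ) := by
    intro x hx
    have hmin : 0 < min γ0 γ1 := lt_min hγ0pos hγ1pos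
    exact lt_of_lt_of_le hmin hx.1
  have hcontu : ContinuousOn Fr (uIcc γ0 γ1) :=
    fun x hx => (hFrcont x (hIoi hx)).continuousWithinAt
  have hmemu : ε ∈ uIcc (Fr γ0) (Fr γ1) := by
    rw [Set.mem_uIcc]
    exact Or.inr ⟨hγ1.le, hγ0.le⟩
  obtain ⟨γstar, hγstarm, hγstar⟩ := intermediate_value_uIcc hcontu hmemu
  have hγstarpos : 0 < γstar := hIoi hγstarm
  have hstareq : (∑ i, d (s γstar (xh i)) (xh i)) = (ε : EReal) := by
    rw [hFr_eq γstar hγstarpos]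
    have hFr' : (∑ i, (d (s γstar (xh i)) (xh i)).toReal) = ε := hγstar
    exact_mod_cast hFr'
  refine ⟨γstar, ⟨hγstarpos, hstareq⟩, ?_⟩
  intro γ' hγ'
  obtain ⟨i, hbi⟩ := hex
  have h1 := (main γ' hγ'.1 hγ'.2).1
  have h2 := (main γstar hγstarpos hstareq).1
  have hfe : (fun j => s γstar (xh j)) = (fun j => s γ' (xh j)) := h1.2 _ h2.1
  have hsi : s γstar (xh i) = s γ' (xh i) := congrFun hfe i
  have hm := hsmem (xh i) hbi γstar hγstarpos
  have he1 := hseq (xh i) hbi γstar hγstarpos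
  have he2 := hseq (xh i) hbi γ' hγ'.1
  rw [← hsi] at he2
  have hd1lt : d₁ (s γstar (xh i)) (xh i) < 0 := hd1neg (xh i) hbi _ hm
  have hmm : γ' * d₁ (s γstar (xh i)) (xh i) = γstar * d₁ (s γstar (xh i)) (xh i) := by
    linarith
  exact mul_right_cancel₀ (ne_of_lt hd1lt) hmm
end SCont
end
end

section
/- Suppose the divergence generator d satisfies Assumptions 2, 3 and 4. Then the function F(γ) = Σ_{i=1}^p d(s(γ, x̂_i), x̂_i) − ε is differentiable and strictly decreasing on (0,∞); moreover lim_{γ→0⁺} F(γ) > 0 and lim_{γ→∞} F(γ) < 0. -/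
open Matrix Set Filter MeasureTheory
open scoped BigOperators Classical

noncomputable section

open scoped Topology

section AuxStmt4

variable {d : ℝ → ℝ → EReal} {d₁ d₂ s : ℝ → ℝ → ℝ}

lemma aux_ne_bot (hgen : GenBasic d) {a b : ℝ} (ha : 0 ≤ a) (hb : 0 ≤ b) : d a b ≠ ⊥ :=
  fun h => absurd (hgen.1 a b ha hb) (by simp [h])

lemma aux_coe (hgen : GenBasic d) (hA4 : Assumption4 d d₁ d₂) {a b : ℝ} (ha : 0 < a)
    (hb : 0 < b) : d a b = (((d a b).toReal : ℝ) : EReal) :=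
  (EReal.coe_toReal (hA4.1 a b ha hb) (aux_ne_bot hgen ha.le hb.le)).symm

lemma aux_toReal_nonneg (hgen : GenBasic d) {a b : ℝ} (ha : 0 ≤ a) (hb : 0 ≤ b) :
    0 ≤ (d a b).toReal := by
  rcases eq_or_ne (d a b) ⊤ with h | h
  · simp [h]
  · have := EReal.toReal_le_toReal (hgen.1 a b ha hb) (by simp) h
    simpa using this

lemma aux_d_self (hgen : GenBasic d) (hA4 : Assumption4 d d₁ d₂) {b : ℝ} (hb : 0 < b) :
    d b b = 0 :=
  (hgen.2.1 b b hb.le hb.le (hA4.1 b b hb hb)).mpr rfl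

lemma aux_phi_self (hgen : GenBasic d) (hA4 : Assumption4 d d₁ d₂) {b : ℝ} (hb : 0 < b) :
    (d b b).toReal = 0 := by rw [aux_d_self hgen hA4 hb]; simp

lemma aux_toReal_pos (hgen : GenBasic d) (hA4 : Assumption4 d d₁ d₂) {a b : ℝ} (ha : 0 < a)
    (hb : 0 < b) (hab : a ≠ b) : 0 < (d a b).toReal := by
  have hne : d a b ≠ 0 := fun h => hab ((hgen.2.1 a b ha.le hb.le (hA4.1 a b ha hb)).mp h)
  have h0 : (0 : EReal) < d a b := lt_of_le_of_ne (hgen.1 a b ha.le hb.le) (Ne.symm hne)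
  have := aux_coe hgen hA4 ha hb
  rw [this] at h0
  exact_mod_cast h0

lemma aux_d1bb (hgen : GenBasic d) (hA4 : Assumption4 d d₁ d₂) {b : ℝ} (hb : 0 < b) :
    d₁ b b = 0 := by
  have hmin : IsLocalMin (fun a => (d a b).toReal) b := by
    filter_upwards [eventually_gt_nhds hb] with a ha
    simpa [aux_phi_self hgen hA4 hb] using aux_toReal_nonneg hgen ha.le hb.le
  exact hmin.hasDerivAt_eq_zero (hA4.2.1 b b hb hb)

lemma aux_convex (hgen : GenBasic d) (hA4 : Assumption4 d d₁ d₂) {b : ℝ} (hb : 0 < b) :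
    ConvexOn ℝ (Ioc 0 b) (fun a => (d a b).toReal) := by
  refine ⟨convex_Ioc 0 b, ?_⟩
  intro x hx y hy α β hα hβ hαβ
  have hz : α • x + β • y ∈ Ioc 0 b := (convex_Ioc 0 b) hx hy hα hβ hαβ
  have hβα : β = 1 - α := by linarith
  subst hβα
  have key := hA4.2.2.2.2 b hb x ⟨hx.1.le, hx.2⟩ y ⟨hy.1.le, hy.2⟩ α ⟨hα, by linarith⟩
  rw [aux_coe hgen hA4 hx.1 hb, aux_coe hgen hA4 hy.1 hb] at key
  have hz' : α • x + (1 - α) • y = α * x + (1 - α) * y := by simp [smul_eq_mul]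
  rw [hz'] at hz ⊢
  rw [aux_coe hgen hA4 hz.1 hb] at key
  rw [← EReal.coe_mul, ← EReal.coe_mul, ← EReal.coe_add] at key
  exact_mod_cast key

lemma aux_d1_mono (hgen : GenBasic d) (hA4 : Assumption4 d d₁ d₂) {b : ℝ} (hb : 0 < b) :
    MonotoneOn (fun a => d₁ a b) (Ioc 0 b) := by
  have h := (aux_convex hgen hA4 hb).monotoneOn_deriv
    (fun x hx => (hA4.2.1 x b hx.1 hb).differentiableAt)
  intro x hx y hy hxy
  have := h hx hy hxy
  rwa [(hA4.2.1 x b hx.1 hb).deriv, (hA4.2.1 y b hy.1 hb).deriv] at this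

lemma aux_d1_neg (hgen : GenBasic d) (hA4 : Assumption4 d d₁ d₂) {b : ℝ} (hb : 0 < b)
    {a : ℝ} (ha : a ∈ Ioo 0 b) : d₁ a b < 0 := by
  obtain ⟨c, hc, hceq⟩ := exists_hasDerivAt_eq_slope (fun t => (d t b).toReal)
      (fun t => d₁ t b) ha.2
      (fun x hx => ((hA4.2.1 x b (lt_of_lt_of_le ha.1 hx.1) hb)).continuousAt.continuousWithinAt)
      (fun x hx => hA4.2.1 x b (ha.1.trans hx.1) hb)
  have hφa : 0 < (d a b).toReal := aux_toReal_pos hgen hA4 ha.1 hb (ne_of_lt ha.2)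
  have hφb : (d b b).toReal = 0 := aux_phi_self hgen hA4 hb
  have hcneg : d₁ c b < 0 := by
    rw [hceq, hφb]
    apply div_neg_of_neg_of_pos <;> linarith [ha.2]
  have hle : d₁ a b ≤ d₁ c b :=
    aux_d1_mono hgen hA4 hb ⟨ha.1, ha.2.le⟩ ⟨ha.1.trans hc.1, hc.2.le⟩ hc.1.le
  linarith

lemma aux_d2_nonneg (hgen : GenBasic d) (hA4 : Assumption4 d d₁ d₂) {b : ℝ} (hb : 0 < b)
    {a : ℝ} (ha : a ∈ Ioo 0 b) : 0 ≤ d₂ a b := by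
  have hd := hA4.2.2.1 a b ha.1 hb
  have hslope := hasDerivAt_iff_tendsto_slope.mp hd
  have h1 : Tendsto (slope (fun t => d₁ t b) a) (𝓝[>] a) (𝓝 (d₂ a b)) :=
    hslope.mono_left (nhdsWithin_mono a (fun x hx => ne_of_gt hx))
  refine ge_of_tendsto h1 ?_
  filter_upwards [Ioo_mem_nhdsGT_of_mem ⟨le_refl a, ha.2⟩] with z hz
  have hmono : d₁ a b ≤ d₁ z b :=
    aux_d1_mono hgen hA4 hb ⟨ha.1, ha.2.le⟩ ⟨ha.1.trans hz.1, hz.2.le⟩ hz.1.le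
  rw [slope_def_field]
  apply div_nonneg <;> linarith [hz.1]

lemma aux_s_mem (hgen : GenBasic d) (hA4 : Assumption4 d d₁ d₂) (hs : EigenMapSpec d₁ s)
    {γ b : ℝ} (hγ : 0 < γ) (hb : 0 < b) : s γ b ∈ Ioo 0 b := by
  obtain ⟨hσnn, hσeq, huniq⟩ := hs.2 γ b hγ hb
  have hd1half : d₁ (b/2) b < 0 := aux_d1_neg hgen hA4 hb ⟨by linarith, by linarith⟩
  have hex : ∃ a₀ ∈ Ioo (0:ℝ) b, 2*a₀ + γ * d₁ a₀ b ≤ 0 := by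
    by_contra hcon
    push_neg at hcon
    have hge : (0:ℝ) ≤ d₁ (b/2) b := by
      by_contra hneg
      push_neg at hneg
      set ε := -(d₁ (b/2) b) with hε
      have hεpos : 0 < ε := by simp only [hε]; linarith
      set t := min (b/2) (γ*ε/2) with ht
      have ht0 : 0 < t := lt_min (by linarith) (by positivity)
      have htb : t ∈ Ioo (0:ℝ) b := ⟨ht0, lt_of_le_of_lt (min_le_left _ _) (by linarith)⟩
      have h1 := hcon t htb
      have h2 : d₁ t b ≤ d₁ (b/2) b :=
        aux_d1_mono hgen hA4 hb ⟨ht0, htb.2.le⟩ ⟨by linarith, by linarith⟩ (min_le_left _ _)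
      have h3 : t ≤ γ*ε/2 := min_le_right _ _
      nlinarith
    linarith
  obtain ⟨a₀, ha₀, hga₀⟩ := hex
  have hgc : ContinuousOn (fun a => 2*a + γ * d₁ a b) (Icc a₀ b) := by
    apply ContinuousOn.add
    · exact (continuous_const.mul continuous_id).continuousOn
    · exact continuousOn_const.mul (fun x hx =>
        (hA4.2.2.1 x b (lt_of_lt_of_le ha₀.1 hx.1) hb).continuousAt.continuousWithinAt)
  have hmem : (0:ℝ) ∈ Icc (2*a₀ + γ * d₁ a₀ b) (2*b + γ * d₁ b b) := by
    constructor
    · exact hga₀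
    · rw [aux_d1bb hgen hA4 hb]; linarith
  obtain ⟨c, hc, hgc0⟩ := intermediate_value_Icc ha₀.2.le hgc hmem
  have hgc0' : 2 * c + γ * d₁ c b = 0 := hgc0
  have hc0 : 0 < c := lt_of_lt_of_le ha₀.1 hc.1
  have hceq : c = s γ b := huniq c hc0.le hgc0'
  have hcb : c ≠ b := by
    intro h
    rw [h, aux_d1bb hgen hA4 hb] at hgc0'
    simp at hgc0'
    linarith
  rw [← hceq]
  exact ⟨hc0, lt_of_le_of_ne hc.2 hcb⟩

lemma aux_s_strictmono (hgen : GenBasic d) (hA4 : Assumption4 d d₁ d₂) (hs : EigenMapSpec d₁ s)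
    {b : ℝ} (hb : 0 < b) {γ₁ γ₂ : ℝ} (h1 : 0 < γ₁) (h12 : γ₁ < γ₂) : s γ₁ b < s γ₂ b := by
  have h2 : 0 < γ₂ := h1.trans h12
  have hm1 := aux_s_mem hgen hA4 hs h1 hb
  have hm2 := aux_s_mem hgen hA4 hs h2 hb
  obtain ⟨-, he1, -⟩ := hs.2 γ₁ b h1 hb
  obtain ⟨-, he2, -⟩ := hs.2 γ₂ b h2 hb
  by_contra hle
  push_neg at hle
  have hmono : d₁ (s γ₂ b) b ≤ d₁ (s γ₁ b) b :=
    aux_d1_mono hgen hA4 hb ⟨hm2.1, hm2.2.le⟩ ⟨hm1.1, hm1.2.le⟩ hle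
  have hd1 : d₁ (s γ₁ b) b < 0 := aux_d1_neg hgen hA4 hb hm1
  nlinarith

lemma aux_phi_anti (hgen : GenBasic d) (hA4 : Assumption4 d d₁ d₂) {b : ℝ} (hb : 0 < b) :
    StrictAntiOn (fun a => (d a b).toReal) (Ioc 0 b) := by
  apply strictAntiOn_of_deriv_neg (convex_Ioc 0 b)
  · exact fun x hx => (hA4.2.1 x b hx.1 hb).continuousAt.continuousWithinAt
  · intro x hx
    rw [interior_Ioc] at hx
    rw [(hA4.2.1 x b hx.1 hb).deriv]
    exact aux_d1_neg hgen hA4 hb hx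

lemma aux_f_deriv (hgen : GenBasic d) (hA4 : Assumption4 d d₁ d₂) {b : ℝ} (hb : 0 < b)
    {a : ℝ} (ha : a ∈ Ioo 0 b) :
    HasDerivAt (fun x => -2*x / d₁ x b)
      (((-2) * d₁ a b - (-2*a) * d₂ a b) / (d₁ a b)^2) a := by
  have h1 : HasDerivAt (fun x : ℝ => -2*x) (-2) a := by
    simpa using (hasDerivAt_id a).const_mul (-2 : ℝ)
  exact h1.div (hA4.2.2.1 a b ha.1 hb) (ne_of_lt (aux_d1_neg hgen hA4 hb ha))

lemma aux_q_pos (hgen : GenBasic d) (hA4 : Assumption4 d d₁ d₂) {b : ℝ} (hb : 0 < b)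
    {a : ℝ} (ha : a ∈ Ioo 0 b) :
    0 < ((-2) * d₁ a b - (-2*a) * d₂ a b) / (d₁ a b)^2 := by
  have hd1 := aux_d1_neg hgen hA4 hb ha
  have hd2 := aux_d2_nonneg hgen hA4 hb ha
  apply div_pos
  · nlinarith [ha.1]
  · exact pow_two_pos_of_ne_zero (ne_of_lt hd1)

lemma aux_f_strictmono (hgen : GenBasic d) (hA4 : Assumption4 d d₁ d₂) {b : ℝ} (hb : 0 < b) :
    StrictMonoOn (fun x => -2*x / d₁ x b) (Ioo 0 b) := by
  apply strictMonoOn_of_deriv_pos (convex_Ioo 0 b)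
  · exact fun x hx => (aux_f_deriv hgen hA4 hb hx).continuousAt.continuousWithinAt
  · intro x hx
    rw [interior_Ioo] at hx
    rw [(aux_f_deriv hgen hA4 hb hx).deriv]
    exact aux_q_pos hgen hA4 hb hx

lemma aux_f_inv (hgen : GenBasic d) (hA4 : Assumption4 d d₁ d₂) (hs : EigenMapSpec d₁ s)
    {b : ℝ} (hb : 0 < b) {γ : ℝ} (hγ : 0 < γ) : -2*(s γ b) / d₁ (s γ b) b = γ := by
  obtain ⟨-, heq, -⟩ := hs.2 γ b hγ hb
  have hd1 : d₁ (s γ b) b < 0 := aux_d1_neg hgen hA4 hb (aux_s_mem hgen hA4 hs hγ hb)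
  rw [div_eq_iff (ne_of_lt hd1)]
  linarith

lemma aux_f_pos (hgen : GenBasic d) (hA4 : Assumption4 d d₁ d₂) {b : ℝ} (hb : 0 < b)
    {a : ℝ} (ha : a ∈ Ioo 0 b) : 0 < -2*a / d₁ a b := by
  have hd1 := aux_d1_neg hgen hA4 hb ha
  apply div_pos_of_neg_of_neg (by linarith [ha.1]) hd1

lemma aux_s_cont (hgen : GenBasic d) (hA4 : Assumption4 d d₁ d₂) (hs : EigenMapSpec d₁ s)
    {b : ℝ} (hb : 0 < b) {γ₀ : ℝ} (hγ₀ : 0 < γ₀) : ContinuousAt (fun γ => s γ b) γ₀ := by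
  have hσ₀ := aux_s_mem hgen hA4 hs hγ₀ hb
  set σ₀ := s γ₀ b with hσ₀def
  rw [Metric.continuousAt_iff]
  intro ε hε
  set ε' := min ε (min (σ₀/2) ((b-σ₀)/2)) with hε'def
  have hε' : 0 < ε' := by
    apply lt_min hε
    apply lt_min
    · linarith [hσ₀.1]
    · linarith [hσ₀.2]
  have hε'2 : ε' ≤ σ₀/2 := (min_le_right _ _).trans (min_le_left _ _)
  have hε'3 : ε' ≤ (b-σ₀)/2 := (min_le_right _ _).trans (min_le_right _ _)
  have hu : σ₀ - ε' ∈ Ioo (0:ℝ) b := ⟨by linarith [hσ₀.1], by linarith [hσ₀.2]⟩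
  have hv : σ₀ + ε' ∈ Ioo (0:ℝ) b := ⟨by linarith [hσ₀.1], by linarith [hσ₀.2]⟩
  have hfσ₀ : -2*σ₀ / d₁ σ₀ b = γ₀ := aux_f_inv hgen hA4 hs hb hγ₀
  have hfu : -2*(σ₀ - ε') / d₁ (σ₀ - ε') b < γ₀ := by
    rw [← hfσ₀]
    exact aux_f_strictmono hgen hA4 hb hu hσ₀ (by linarith)
  have hfv : γ₀ < -2*(σ₀ + ε') / d₁ (σ₀ + ε') b := by
    rw [← hfσ₀]
    exact aux_f_strictmono hgen hA4 hb hσ₀ hv (by linarith)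
  refine ⟨min (γ₀ - -2*(σ₀ - ε') / d₁ (σ₀ - ε') b) (-2*(σ₀ + ε') / d₁ (σ₀ + ε') b - γ₀),
    lt_min (by linarith) (by linarith), ?_⟩
  intro γ hγdist
  rw [Real.dist_eq] at hγdist
  have habs := abs_lt.mp hγdist
  have hγu : -2*(σ₀ - ε') / d₁ (σ₀ - ε') b < γ := by
    have := habs.1
    have h2 := min_le_left (γ₀ - -2*(σ₀ - ε') / d₁ (σ₀ - ε') b) (-2*(σ₀ + ε') / d₁ (σ₀ + ε') b - γ₀)
    linarith
  have hγv : γ < -2*(σ₀ + ε') / d₁ (σ₀ + ε') b := by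
    have := habs.2
    have h2 := min_le_right (γ₀ - -2*(σ₀ - ε') / d₁ (σ₀ - ε') b) (-2*(σ₀ + ε') / d₁ (σ₀ + ε') b - γ₀)
    linarith
  have hγpos : 0 < γ := (aux_f_pos hgen hA4 hb hu).trans hγu
  have hσ := aux_s_mem hgen hA4 hs hγpos hb
  have hfσ : -2*(s γ b) / d₁ (s γ b) b = γ := aux_f_inv hgen hA4 hs hb hγpos
  have hlo : σ₀ - ε' < s γ b := by
    by_contra hle
    push_neg at hle
    have := (aux_f_strictmono hgen hA4 hb).monotoneOn hσ hu hle
    rw [hfσ] at this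
    linarith
  have hhi : s γ b < σ₀ + ε' := by
    by_contra hle
    push_neg at hle
    have := (aux_f_strictmono hgen hA4 hb).monotoneOn hv hσ hle
    rw [hfσ] at this
    linarith
  rw [Real.dist_eq, abs_lt]
  constructor
  · have := min_le_left ε (min (σ₀/2) ((b-σ₀)/2))
    linarith
  · have := min_le_left ε (min (σ₀/2) ((b-σ₀)/2))
    linarith

lemma aux_s_hasDeriv (hgen : GenBasic d) (hA4 : Assumption4 d d₁ d₂) (hs : EigenMapSpec d₁ s)
    {b : ℝ} (hb : 0 < b) {γ₀ : ℝ} (hγ₀ : 0 < γ₀) :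
    HasDerivAt (fun γ => s γ b)
      ((((-2) * d₁ (s γ₀ b) b - (-2*(s γ₀ b)) * d₂ (s γ₀ b) b) / (d₁ (s γ₀ b) b)^2)⁻¹) γ₀ := by
  have hσ₀ := aux_s_mem hgen hA4 hs hγ₀ hb
  apply HasDerivAt.of_local_left_inverse (aux_s_cont hgen hA4 hs hb hγ₀)
    (aux_f_deriv hgen hA4 hb hσ₀) (ne_of_gt (aux_q_pos hgen hA4 hb hσ₀))
  filter_upwards [eventually_gt_nhds hγ₀] with γ hγ
  exact aux_f_inv hgen hA4 hs hb hγ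

lemma aux_term_hasDeriv (hgen : GenBasic d) (hA4 : Assumption4 d d₁ d₂) (hs : EigenMapSpec d₁ s)
    {b : ℝ} (hb : 0 < b) {γ₀ : ℝ} (hγ₀ : 0 < γ₀) :
    DifferentiableAt ℝ (fun γ => (d (s γ b) b).toReal) γ₀ := by
  have hσ₀ := aux_s_mem hgen hA4 hs hγ₀ hb
  have h := (hA4.2.1 (s γ₀ b) b hσ₀.1 hb).comp γ₀ (aux_s_hasDeriv hgen hA4 hs hb hγ₀)
  exact h.differentiableAt

lemma aux_s_atTop (hgen : GenBasic d) (hA4 : Assumption4 d d₁ d₂) (hs : EigenMapSpec d₁ s)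
    {b : ℝ} (hb : 0 < b) : Tendsto (fun γ => s γ b) atTop (𝓝 b) := by
  rw [tendsto_order]
  constructor
  · intro c hc
    rcases lt_or_ge c 0 with hc0 | hc0
    · filter_upwards [eventually_gt_atTop (0:ℝ)] with γ hγ
      exact hc0.trans (aux_s_mem hgen hA4 hs hγ hb).1
    · set a := (c+b)/2 with hadef
      have ha : a ∈ Ioo (0:ℝ) b := ⟨by simp only [hadef]; linarith, by simp only [hadef]; linarith⟩
      have hca : c < a := by simp only [hadef]; linarith
      have hD : d₁ a b < 0 := aux_d1_neg hgen hA4 hb ha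
      filter_upwards [eventually_ge_atTop ((2*b)/(-(d₁ a b)) + 1)] with γ hγ
      have hγpos : 0 < γ := by
        have hD' : 0 < -(d₁ a b) := by linarith
        have : 0 < (2*b)/(-(d₁ a b)) := div_pos (by linarith) hD'
        linarith
      obtain ⟨-, heq, -⟩ := hs.2 γ b hγpos hb
      have hσ := aux_s_mem hgen hA4 hs hγpos hb
      by_contra hle
      push_neg at hle
      have hle' : s γ b ≤ a := le_trans hle hca.le
      have hmono : d₁ (s γ b) b ≤ d₁ a b :=
        aux_d1_mono hgen hA4 hb ⟨hσ.1, hσ.2.le⟩ ⟨ha.1, ha.2.le⟩ hle'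
      have hkey : (2*b)/(-(d₁ a b)) < γ := by linarith
      rw [div_lt_iff₀ (by linarith : (0:ℝ) < -(d₁ a b))] at hkey
      nlinarith [hσ.2, hσ.1]
  · intro c hc
    filter_upwards [eventually_gt_atTop (0:ℝ)] with γ hγ
    exact (aux_s_mem hgen hA4 hs hγ hb).2.trans hc

lemma aux_term_atTop (hgen : GenBasic d) (hA4 : Assumption4 d d₁ d₂) (hs : EigenMapSpec d₁ s)
    {b : ℝ} (hb : 0 < b) :
    Tendsto (fun γ => (d (s γ b) b).toReal) atTop (𝓝 0) := by
  have hcont : ContinuousAt (fun t => (d t b).toReal) b := (hA4.2.1 b b hb hb).continuousAt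
  have := hcont.tendsto.comp (aux_s_atTop hgen hA4 hs hb)
  rwa [aux_phi_self hgen hA4 hb] at this

lemma aux_s_zero (hgen : GenBasic d) (hA4 : Assumption4 d d₁ d₂) (hs : EigenMapSpec d₁ s)
    {b : ℝ} (hb : 0 < b) : Tendsto (fun γ => s γ b) (𝓝[>] 0) (𝓝 0) := by
  rw [tendsto_order]
  constructor
  · intro c hc
    filter_upwards [self_mem_nhdsWithin] with γ hγ
    exact lt_trans hc (aux_s_mem hgen hA4 hs hγ hb).1
  · intro c hc
    set ε := min c (b/2) with hεdef
    have hε : ε ∈ Ioo (0:ℝ) b :=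
      ⟨lt_min hc (by linarith), lt_of_le_of_lt (min_le_right _ _) (by linarith)⟩
    have hD : d₁ ε b < 0 := aux_d1_neg hgen hA4 hb hε
    have hδpos : 0 < 2*ε/(-(d₁ ε b)) := by
      apply div_pos (by linarith [hε.1]) (by linarith)
    filter_upwards [Ioo_mem_nhdsGT_of_mem ⟨le_refl (0:ℝ), hδpos⟩] with γ hγ
    obtain ⟨-, heq, -⟩ := hs.2 γ b hγ.1 hb
    have hσ := aux_s_mem hgen hA4 hs hγ.1 hb
    have hlt : s γ b < ε := by
      by_contra hle
      push_neg at hle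
      have hmono : d₁ ε b ≤ d₁ (s γ b) b :=
        aux_d1_mono hgen hA4 hb ⟨hε.1, hε.2.le⟩ ⟨hσ.1, hσ.2.le⟩ hle
      have h2 : γ < 2*ε/(-(d₁ ε b)) := hγ.2
      rw [lt_div_iff₀ (by linarith : (0:ℝ) < -(d₁ ε b))] at h2
      nlinarith [hγ.1]
    exact lt_of_lt_of_le hlt (min_le_left _ _)

lemma aux_d_zero (hgen : GenBasic d) (hA4 : Assumption4 d d₁ d₂) (hs : EigenMapSpec d₁ s)
    {b : ℝ} (hb : 0 < b) :
    Tendsto (fun γ => d (s γ b) b) (𝓝[>] 0) (𝓝 (d 0 b)) := by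
  have hcw : ContinuousWithinAt (fun a => d a b) (Ici 0) 0 := (hgen.2.2 b hb) 0 self_mem_Ici
  apply hcw.tendsto.comp
  rw [tendsto_nhdsWithin_iff]
  refine ⟨aux_s_zero hgen hA4 hs hb, ?_⟩
  filter_upwards [self_mem_nhdsWithin] with γ hγ
  exact (aux_s_mem hgen hA4 hs hγ hb).1.le

def erealHom : ℝ →+ EReal where
  toFun := Real.toEReal
  map_zero' := by norm_cast
  map_add' := EReal.coe_add

lemma aux_coe_sum {ι : Type*} (t : Finset ι) (f : ι → ℝ) :
    ((∑ i ∈ t, f i : ℝ) : EReal) = ∑ i ∈ t, ((f i : ℝ) : EReal) :=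
  map_sum erealHom f t

end AuxStmt4

/-- Proposition 4: structural properties of `F`.
Under Assumptions 2, 3 and 4, the function `F(γ) = Σᵢ d(s(γ,x̂ᵢ),x̂ᵢ) − ε` is
differentiable and strictly decreasing on `(0,∞)`; moreover its limit as `γ → 0⁺`
is positive (possibly `+∞`) and its limit as `γ → ∞` is negative. -/
theorem stmt_4 {p : ℕ}
    (d : ℝ → ℝ → EReal) (d₁ d₂ s : ℝ → ℝ → ℝ)
    (xh : Fin p → ℝ) (ε : ℝ)
    (hmono : Monotone xh) (hnn : ∀ i, 0 ≤ xh i)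
    (hgen : GenBasic d)
    (hA3 : Assumption3 d xh ε)
    (hA4 : Assumption4 d d₁ d₂)
    (hs : EigenMapSpec d₁ s) :
    (∀ γ : ℝ, 0 < γ →
      DifferentiableAt ℝ (fun γ' => (∑ i, d (s γ' (xh i)) (xh i)).toReal - ε) γ) ∧
    StrictAntiOn (fun γ => (∑ i, d (s γ (xh i)) (xh i)).toReal - ε) (Set.Ioi 0) ∧
    (∃ L : EReal, 0 < L ∧
      Tendsto (fun γ => (((∑ i, d (s γ (xh i)) (xh i)).toReal - ε : ℝ) : EReal))
        (nhdsWithin 0 (Set.Ioi 0)) (nhds L)) ∧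
    (∃ L : EReal, L < 0 ∧
      Tendsto (fun γ => (((∑ i, d (s γ (xh i)) (xh i)).toReal - ε : ℝ) : EReal))
        atTop (nhds L)) := by

  obtain ⟨hA3top, hεpos, hεlt⟩ := hA3
  set r : Fin p → ℝ → ℝ := fun i γ => (d (s γ (xh i)) (xh i)).toReal with hr
  have hd00 : ∀ i : Fin p, xh i = 0 → d 0 (xh i) = 0 := by
    intro i h
    have hne : d (xh i) (xh i) ≠ ⊤ := hA3top i
    rw [h] at hne ⊢
    exact (hgen.2.1 0 0 le_rfl le_rfl hne).mpr rfl
  have hzero : ∀ i : Fin p, xh i = 0 → ∀ γ : ℝ, d (s γ (xh i)) (xh i) = 0 := by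
    intro i h γ
    have := hd00 i h
    rw [h] at this ⊢
    rw [hs.1 γ 0 (Or.inr rfl)]
    exact this
  have hcoe : ∀ γ : ℝ, 0 < γ → ∀ i : Fin p, d (s γ (xh i)) (xh i) = ((r i γ : ℝ) : EReal) := by
    intro γ hγ i
    rcases (hnn i).lt_or_eq with hb | hb
    · exact aux_coe hgen hA4 (aux_s_mem hgen hA4 hs hγ hb).1 hb
    · rw [hr]; simp only; rw [hzero i hb.symm γ]; simp
  have hsumToReal : ∀ γ : ℝ, 0 < γ →
      (∑ i, d (s γ (xh i)) (xh i)).toReal = ∑ i, r i γ := by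
    intro γ hγ
    have : (∑ i, d (s γ (xh i)) (xh i)) = ((∑ i, r i γ : ℝ) : EReal) := by
      rw [aux_coe_sum]
      exact Finset.sum_congr rfl (fun i _ => hcoe γ hγ i)
    rw [this, EReal.toReal_coe]
  have hrnn : ∀ (i : Fin p) (γ : ℝ), 0 < γ → 0 ≤ r i γ := by
    intro i γ hγ
    rcases (hnn i).lt_or_eq with hb | hb
    · exact aux_toReal_nonneg hgen (aux_s_mem hgen hA4 hs hγ hb).1.le hb.le
    · rw [hr]; simp only; rw [hzero i hb.symm γ]; simp
  have hwit : ∃ i : Fin p, 0 < xh i := by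
    by_contra hno
    push_neg at hno
    have hall : ∀ i, xh i = 0 := fun i => le_antisymm (hno i) (hnn i)
    have hsum0 : (∑ i, d 0 (xh i)) = 0 :=
      Finset.sum_eq_zero (fun i _ => hd00 i (hall i))
    rw [hsum0] at hεlt
    have h0 : (0 : EReal) < (ε : EReal) := by exact_mod_cast hεpos
    exact absurd (h0.trans hεlt) (lt_irrefl _)
  refine ⟨?_, ?_, ?_, ?_⟩
  · -- differentiability
    intro γ hγ
    have hdiff : DifferentiableAt ℝ (fun γ' => (∑ i, r i γ') - ε) γ := by
      apply DifferentiableAt.sub_const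
      apply DifferentiableAt.fun_sum
      intro i _
      rcases (hnn i).lt_or_eq with hb | hb
      · exact aux_term_hasDeriv hgen hA4 hs hb hγ
      · have : r i = fun _ => (0:ℝ) := by
          funext γ'
          rw [hr]; simp only; rw [hzero i hb.symm γ']; simp
        rw [this]
        exact differentiableAt_const 0
    apply hdiff.congr_of_eventuallyEq
    filter_upwards [Ioi_mem_nhds hγ] with γ' hγ'
    rw [hsumToReal γ' hγ']
  · -- strict anti
    intro γ₁ h₁ γ₂ h₂ h12
    simp only
    rw [hsumToReal γ₁ h₁, hsumToReal γ₂ h₂]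
    have hsumlt : ∑ i, r i γ₂ < ∑ i, r i γ₁ := by
      apply Finset.sum_lt_sum
      · intro i _
        rcases (hnn i).lt_or_eq with hb | hb
        · have hσ₁ := aux_s_mem hgen hA4 hs h₁ hb
          have hσ₂ := aux_s_mem hgen hA4 hs h₂ hb
          have hlt := aux_s_strictmono hgen hA4 hs hb h₁ h12
          exact (aux_phi_anti hgen hA4 hb ⟨hσ₁.1, hσ₁.2.le⟩ ⟨hσ₂.1, hσ₂.2.le⟩ hlt).le
        · rw [hr]; simp only; rw [hzero i hb.symm γ₁, hzero i hb.symm γ₂]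
      · obtain ⟨i, hb⟩ := hwit
        refine ⟨i, Finset.mem_univ i, ?_⟩
        have hσ₁ := aux_s_mem hgen hA4 hs h₁ hb
        have hσ₂ := aux_s_mem hgen hA4 hs h₂ hb
        have hlt := aux_s_strictmono hgen hA4 hs hb h₁ h12
        exact aux_phi_anti hgen hA4 hb ⟨hσ₁.1, hσ₁.2.le⟩ ⟨hσ₂.1, hσ₂.2.le⟩ hlt
    linarith
  · -- limit at 0⁺
    by_cases htop : ∀ i : Fin p, d 0 (xh i) ≠ ⊤
    · refine ⟨((∑ i, (d 0 (xh i)).toReal - ε : ℝ) : EReal), ?_, ?_⟩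
      · have hEq : (∑ i, d 0 (xh i)) = ((∑ i, (d 0 (xh i)).toReal : ℝ) : EReal) := by
          rw [aux_coe_sum]
          exact Finset.sum_congr rfl fun i _ =>
            (EReal.coe_toReal (htop i) (aux_ne_bot hgen le_rfl (hnn i))).symm
        rw [hEq] at hεlt
        have hlt : ε < ∑ i, (d 0 (xh i)).toReal := by exact_mod_cast hεlt
        exact_mod_cast (by linarith : (0:ℝ) < ∑ i, (d 0 (xh i)).toReal - ε)
      · rw [EReal.tendsto_coe]
        have H : Tendsto (fun γ => (∑ i, r i γ) - ε) (𝓝[>] (0:ℝ))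
            (𝓝 ((∑ i, (d 0 (xh i)).toReal) - ε)) := by
          apply Tendsto.sub_const
          apply tendsto_finset_sum
          intro i _
          rcases (hnn i).lt_or_eq with hb | hb
          · have h1 := aux_d_zero hgen hA4 hs hb
            have h2 : Tendsto (fun γ => ((r i γ : ℝ) : EReal)) (𝓝[>] (0:ℝ))
                (𝓝 (d 0 (xh i))) := by
              apply h1.congr'
              filter_upwards [self_mem_nhdsWithin] with γ hγ
              exact hcoe γ hγ i
            rw [← EReal.coe_toReal (htop i) (aux_ne_bot hgen le_rfl (hnn i))] at h2
            exact EReal.tendsto_coe.mp h2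
          · have heq0 : r i = fun _ => (0:ℝ) := by
              funext γ'
              rw [hr]; simp only; rw [hzero i hb.symm γ']; simp
            rw [heq0, hd00 i hb.symm]
            simp only [EReal.toReal_zero]
            exact tendsto_const_nhds
        apply H.congr'
        filter_upwards [self_mem_nhdsWithin] with γ hγ
        rw [hsumToReal γ hγ]
    · push_neg at htop
      obtain ⟨j, hjtop⟩ := htop
      have hbj : 0 < xh j := by
        rcases (hnn j).lt_or_eq with hb | hb
        · exact hb
        · exact absurd (hd00 j hb.symm) (by rw [hjtop]; simp)
      refine ⟨⊤, ?_, ?_⟩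
      · exact lt_top_iff_ne_top.mpr (by simp)
      · rw [EReal.tendsto_nhds_top_iff_real]
        intro x
        have hj : Tendsto (fun γ => r j γ) (𝓝[>] (0:ℝ)) atTop := by
          have h1 := aux_d_zero hgen hA4 hs hbj
          rw [hjtop, EReal.tendsto_nhds_top_iff_real] at h1
          rw [tendsto_atTop]
          intro y
          filter_upwards [h1 y, self_mem_nhdsWithin] with γ hγ hγpos
          rw [hcoe γ hγpos j] at hγ
          exact_mod_cast le_of_lt hγ
        filter_upwards [hj.eventually_ge_atTop (x + ε + 1), self_mem_nhdsWithin]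
          with γ h1 h2
        have hF : (∑ i, d (s γ (xh i)) (xh i)).toReal = ∑ i, r i γ := hsumToReal γ h2
        have hge : r j γ ≤ ∑ i, r i γ :=
          Finset.single_le_sum (fun i _ => hrnn i γ h2) (Finset.mem_univ j)
        have : x < (∑ i, d (s γ (xh i)) (xh i)).toReal - ε := by
          rw [hF]; linarith
        exact_mod_cast this
  · -- limit at ∞
    refine ⟨((-ε : ℝ) : EReal), by exact_mod_cast (by linarith : (-ε:ℝ) < 0), ?_⟩
    rw [EReal.tendsto_coe]
    have H : Tendsto (fun γ => (∑ i, r i γ) - ε) atTop (𝓝 ((∑ _i : Fin p, (0:ℝ)) - ε)) := by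
      apply Tendsto.sub_const
      apply tendsto_finset_sum
      intro i _
      rcases (hnn i).lt_or_eq with hb | hb
      · exact aux_term_atTop hgen hA4 hs hb
      · have heq0 : r i = fun _ => (0:ℝ) := by
          funext γ'
          rw [hr]; simp only; rw [hzero i hb.symm γ']; simp
        rw [heq0]
        exact tendsto_const_nhds
    have hval : (∑ _i : Fin p, (0:ℝ)) - ε = -ε := by simp
    rw [hval] at H
    apply H.congr'
    filter_upwards [eventually_gt_atTop (0:ℝ)] with γ hγ
    rw [hsumToReal γ hγ]
end
end

section
/- Suppose the divergence generator d satisfies Assumptions 2, 4 and 5. Then for every γ > 0 and all b₁, b₂ ∈ (0,∞) with b₁ ≤ b₂, the eigenvalue map satisfies s(γ, b₂)/s(γ, b₁) ≤ b₂/b₁. -/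
open Matrix Set Filter MeasureTheory
open scoped BigOperators Classical

noncomputable section

namespace Stmt7Aux

open Topology

/-- Lift a finite nonnegative `EReal` value to a real. -/
lemma lift_fin {x : EReal} (h0 : 0 ≤ x) (ht : x ≠ ⊤) : x = ((x.toReal : ℝ) : EReal) :=
  (EReal.coe_toReal ht (by rintro rfl; simp at h0)).symm

variable {d : ℝ → ℝ → EReal} {d₁ d₂ d₁b : ℝ → ℝ → ℝ}

/-- Real convexity of `a ↦ (d a b).toReal` on `(0,b]`. -/
lemma fconv
    (hnn : ∀ a b : ℝ, 0 ≤ a → 0 ≤ b → 0 ≤ d a b)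
    (hfin : ∀ a b : ℝ, 0 < a → 0 < b → d a b ≠ ⊤)
    (hcvx : ∀ b : ℝ, 0 < b → ∀ a₁ ∈ Set.Icc (0:ℝ) b, ∀ a₂ ∈ Set.Icc (0:ℝ) b, ∀ t ∈ Set.Icc (0:ℝ) 1,
      d (t * a₁ + (1 - t) * a₂) b ≤ (t : EReal) * d a₁ b + ((1 - t : ℝ) : EReal) * d a₂ b)
    {b : ℝ} (hb : 0 < b) :
    ConvexOn ℝ (Set.Ioc 0 b) (fun a => (d a b).toReal) := by
  refine ⟨convex_Ioc _ _, ?_⟩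
  intro x hx y hy p q hp hq hpq
  have hq' : q = 1 - p := by linarith
  have hcombo : 0 < p * x + q * y := by
    rcases eq_or_lt_of_le hp with h | h
    · have : p = 0 := h.symm
      subst this
      have : q = 1 := by linarith
      subst this; simpa using hy.1
    · have h1 : 0 < p * x := mul_pos h hx.1
      have h2 : 0 ≤ q * y := mul_nonneg hq hy.1.le
      linarith
  have hcombo' : p * x + q * y ≤ b := by nlinarith [hx.2, hy.2]
  have H := hcvx b hb x ⟨hx.1.le, hx.2⟩ y ⟨hy.1.le, hy.2⟩ p ⟨hp, by linarith⟩
  rw [← hq'] at H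
  have hX := lift_fin (hnn x b hx.1.le hb.le) (hfin x b hx.1 hb)
  have hY := lift_fin (hnn y b hy.1.le hb.le) (hfin y b hy.1 hb)
  have hZ := lift_fin (hnn _ b hcombo.le hb.le) (hfin _ b hcombo hb)
  rw [hX, hY, hZ, ← EReal.coe_mul, ← EReal.coe_mul, ← EReal.coe_add, EReal.coe_le_coe_iff] at H
  simpa [smul_eq_mul] using H

/-- positivity facts about `f = (d · b).toReal`. -/
lemma f_nonneg (hnn : ∀ a b : ℝ, 0 ≤ a → 0 ≤ b → 0 ≤ d a b)
    {a b : ℝ} (ha : 0 ≤ a) (hb : 0 ≤ b) : 0 ≤ (d a b).toReal := by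
  by_cases ht : d a b = ⊤
  · simp [ht]
  · have h := hnn a b ha hb
    rw [lift_fin (hnn a b ha hb) ht] at h
    exact_mod_cast h

lemma f_diag_zero
    (hnn : ∀ a b : ℝ, 0 ≤ a → 0 ≤ b → 0 ≤ d a b)
    (hzero : ∀ a b : ℝ, 0 ≤ a → 0 ≤ b → d a b ≠ ⊤ → (d a b = 0 ↔ a = b))
    (hfin : ∀ a b : ℝ, 0 < a → 0 < b → d a b ≠ ⊤)
    {b : ℝ} (hb : 0 < b) : (d b b).toReal = 0 := by
  have : d b b = 0 := (hzero b b hb.le hb.le (hfin b b hb hb)).mpr rfl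
  simp [this]

lemma f_pos
    (hnn : ∀ a b : ℝ, 0 ≤ a → 0 ≤ b → 0 ≤ d a b)
    (hzero : ∀ a b : ℝ, 0 ≤ a → 0 ≤ b → d a b ≠ ⊤ → (d a b = 0 ↔ a = b))
    (hfin : ∀ a b : ℝ, 0 < a → 0 < b → d a b ≠ ⊤)
    {a b : ℝ} (ha : 0 < a) (hb : 0 < b) (hab : a ≠ b) : 0 < (d a b).toReal := by
  have hne : d a b ≠ 0 := fun h => hab ((hzero a b ha.le hb.le (hfin a b ha hb)).mp h)
  have h0 : 0 ≤ (d a b).toReal := f_nonneg hnn ha.le hb.le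
  rcases h0.eq_or_lt with h | h
  · exfalso
    apply hne
    have := lift_fin (hnn a b ha.le hb.le) (hfin a b ha hb)
    rw [this, ← h]
    norm_num
  · exact h


lemma deriv_le_slope {f : ℝ → ℝ} {b x y f'x : ℝ}
    (hf : ConvexOn ℝ (Set.Ioc 0 b) f)
    (hx : x ∈ Set.Ioc (0:ℝ) b) (hy : y ∈ Set.Ioc (0:ℝ) b) (hxy : x < y)
    (hd : HasDerivAt f f'x x) :
    f'x ≤ (f y - f x) / (y - x) := by
  have T : Tendsto (slope f x) (𝓝[>] x) (𝓝 f'x) :=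
    (hasDerivAt_iff_tendsto_slope.mp hd).mono_left
      (nhdsWithin_mono x fun z hz => by simpa using (ne_of_gt hz))
  refine le_of_tendsto T ?_
  filter_upwards [Ioo_mem_nhdsGT_of_mem (⟨le_refl x, hxy⟩ : x ∈ Set.Ico x y)] with z hz
  have hzs : z ∈ Set.Ioc (0:ℝ) b := ⟨lt_trans hx.1 hz.1, le_trans hz.2.le hy.2⟩
  rw [slope_def_field]
  exact hf.secant_mono hx hzs hy (ne_of_gt hz.1) (ne_of_gt hxy) hz.2.le

lemma slope_le_deriv {f : ℝ → ℝ} {b x y f'y : ℝ}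
    (hf : ConvexOn ℝ (Set.Ioc 0 b) f)
    (hx : x ∈ Set.Ioc (0:ℝ) b) (hy : y ∈ Set.Ioc (0:ℝ) b) (hxy : x < y)
    (hd : HasDerivAt f f'y y) :
    (f y - f x) / (y - x) ≤ f'y := by
  have T : Tendsto (slope f y) (𝓝[<] y) (𝓝 f'y) :=
    (hasDerivAt_iff_tendsto_slope.mp hd).mono_left
      (nhdsWithin_mono y fun z hz => by simpa using (ne_of_lt hz))
  refine ge_of_tendsto T ?_
  filter_upwards [Ioo_mem_nhdsLT_of_mem (⟨hxy, le_refl y⟩ : y ∈ Set.Ioc x y)] with z hz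
  have hzs : z ∈ Set.Ioc (0:ℝ) b := ⟨lt_trans hx.1 hz.1, hz.2.le.trans hy.2⟩
  rw [slope_def_field]
  have h := hf.secant_mono hy hx hzs (ne_of_lt hxy) (ne_of_lt hz.2) hz.1.le
  have e : (f y - f x)/(y - x) = (f x - f y)/(x - y) := by
    rw [div_eq_div_iff (by linarith) (by linarith)]; ring
  rw [e]; exact h


lemma d1_diag_zero {dd₁ : ℝ → ℝ → ℝ}
    (hnn : ∀ a b : ℝ, 0 ≤ a → 0 ≤ b → 0 ≤ d a b)
    (hzero : ∀ a b : ℝ, 0 ≤ a → 0 ≤ b → d a b ≠ ⊤ → (d a b = 0 ↔ a = b))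
    (hfin : ∀ a b : ℝ, 0 < a → 0 < b → d a b ≠ ⊤)
    (hd1 : ∀ a b : ℝ, 0 < a → 0 < b → HasDerivAt (fun t => (d t b).toReal) (dd₁ a b) a)
    {b : ℝ} (hb : 0 < b) : dd₁ b b = 0 := by
  have hfb : (d b b).toReal = 0 := by
    have : d b b = 0 := (hzero b b hb.le hb.le (hfin b b hb hb)).mpr rfl
    simp [this]
  have hmin : IsLocalMin (fun a => (d a b).toReal) b := by
    have : ∀ᶠ a in 𝓝 b, (fun a => (d a b).toReal) b ≤ (d a b).toReal := by
      filter_upwards [isOpen_Ioi.mem_nhds hb] with a (ha : (0:ℝ) < a)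
      rw [hfb]
      by_cases ht : d a b = ⊤
      · simp [ht]
      · have h := hnn a b ha.le hb.le
        have hcoe := (EReal.coe_toReal ht (by intro hbot; rw [hbot] at h; simp at h)).symm
        rw [hcoe] at h
        exact_mod_cast h
    exact this
  exact hmin.hasDerivAt_eq_zero (hd1 b b hb hb)

lemma d1_neg {dd₁ : ℝ → ℝ → ℝ}
    (hnn : ∀ a b : ℝ, 0 ≤ a → 0 ≤ b → 0 ≤ d a b)
    (hzero : ∀ a b : ℝ, 0 ≤ a → 0 ≤ b → d a b ≠ ⊤ → (d a b = 0 ↔ a = b))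
    (hfin : ∀ a b : ℝ, 0 < a → 0 < b → d a b ≠ ⊤)
    (hd1 : ∀ a b : ℝ, 0 < a → 0 < b → HasDerivAt (fun t => (d t b).toReal) (dd₁ a b) a)
    (hcvx : ∀ b : ℝ, 0 < b → ∀ a₁ ∈ Set.Icc (0:ℝ) b, ∀ a₂ ∈ Set.Icc (0:ℝ) b, ∀ t ∈ Set.Icc (0:ℝ) 1,
      d (t * a₁ + (1 - t) * a₂) b ≤ (t : EReal) * d a₁ b + ((1 - t : ℝ) : EReal) * d a₂ b)
    {a b : ℝ} (ha : 0 < a) (hab : a < b) : dd₁ a b < 0 := by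
  have hb : 0 < b := lt_trans ha hab
  have hf := fconv hnn hfin hcvx hb
  have h := deriv_le_slope hf ⟨ha, hab.le⟩ ⟨hb, le_refl b⟩ hab (hd1 a b ha hb)
  have hfb : (d b b).toReal = 0 := f_diag_zero hnn hzero hfin hb
  have hfa : 0 < (d a b).toReal := f_pos hnn hzero hfin ha hb (ne_of_lt hab)
  refine lt_of_le_of_lt h (div_neg_of_neg_of_pos ?_ (by linarith))
  rw [hfb]
  linarith

lemma d1_mono {dd₁ : ℝ → ℝ → ℝ}
    (hnn : ∀ a b : ℝ, 0 ≤ a → 0 ≤ b → 0 ≤ d a b)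
    (hfin : ∀ a b : ℝ, 0 < a → 0 < b → d a b ≠ ⊤)
    (hd1 : ∀ a b : ℝ, 0 < a → 0 < b → HasDerivAt (fun t => (d t b).toReal) (dd₁ a b) a)
    (hcvx : ∀ b : ℝ, 0 < b → ∀ a₁ ∈ Set.Icc (0:ℝ) b, ∀ a₂ ∈ Set.Icc (0:ℝ) b, ∀ t ∈ Set.Icc (0:ℝ) 1,
      d (t * a₁ + (1 - t) * a₂) b ≤ (t : EReal) * d a₁ b + ((1 - t : ℝ) : EReal) * d a₂ b)
    {b x y : ℝ} (hb : 0 < b) (hx : 0 < x) (hxy : x ≤ y) (hyb : y ≤ b) :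
    dd₁ x b ≤ dd₁ y b := by
  rcases eq_or_lt_of_le hxy with h | h
  · rw [h]
  · have hf := fconv hnn hfin hcvx hb
    have hxs : x ∈ Set.Ioc (0:ℝ) b := ⟨hx, le_trans hxy hyb⟩
    have hys : y ∈ Set.Ioc (0:ℝ) b := ⟨lt_trans hx h, hyb⟩
    exact le_trans (deriv_le_slope hf hxs hys h (hd1 x b hx hb))
      (slope_le_deriv hf hxs hys h (hd1 y b (lt_trans hx h) hb))

lemma path_deriv {d₁ d₂ d₁b : ℝ → ℝ → ℝ}
    (hd2 : ∀ a b : ℝ, 0 < a → 0 < b → HasDerivAt (fun t => d₁ t b) (d₂ a b) a)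
    (hd1b : ∀ a b : ℝ, 0 < a → 0 < b → HasDerivAt (fun t => d₁ a t) (d₁b a b) b)
    (hd2cont : ContinuousOn (fun q : ℝ × ℝ => d₂ q.1 q.2) (Set.Ioi 0 ×ˢ Set.Ioi 0))
    {c t₀ : ℝ} (hc : 0 < c) (ht₀ : 0 < t₀) :
    HasDerivAt (fun t => d₁ (c*t) t) (c * d₂ (c*t₀) t₀ + d₁b (c*t₀) t₀) t₀ := by
  have ha₀ : 0 < c * t₀ := mul_pos hc ht₀
  have hG : HasDerivAt (fun t => d₁ (c*t₀) t) (d₁b (c*t₀) t₀) t₀ := hd1b _ _ ha₀ ht₀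
  have key : ∀ t : ℝ, 0 < t → t ≠ t₀ →
      ∃ ξ, |ξ - c*t₀| ≤ c * |t - t₀| ∧ 0 < ξ ∧
        d₁ (c*t) t - d₁ (c*t₀) t = d₂ ξ t * (c*t - c*t₀) := by
    intro t ht hne
    have hcont : ∀ u v : ℝ, 0 < u → ContinuousOn (fun x => d₁ x t) (Set.Icc u v) := by
      intro u v hu x hx
      exact ((hd2 x t (lt_of_lt_of_le hu hx.1) ht).continuousAt).continuousWithinAt
    rcases hne.lt_or_gt with h | h
    · have hlt : c*t < c*t₀ := by nlinarith
      obtain ⟨ξ, hξ, heq⟩ := exists_hasDerivAt_eq_slope (fun x => d₁ x t) (fun x => d₂ x t) hlt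
        (hcont _ _ (mul_pos hc ht))
        (fun x hx => hd2 x t (lt_trans (mul_pos hc ht) hx.1) ht)
      refine ⟨ξ, ?_, lt_trans (mul_pos hc ht) hξ.1, ?_⟩
      · have habs1 : |t - t₀| = t₀ - t := by
          rw [abs_of_neg (by linarith : t - t₀ < 0)]; ring
        rw [habs1, abs_le]
        constructor <;> nlinarith [hξ.1, hξ.2]
      · have hne2 : c*t₀ - c*t ≠ 0 := sub_ne_zero.mpr (ne_of_gt hlt)
        have e : c*t - c*t₀ = -(c*t₀ - c*t) := by ring
        rw [heq, e, mul_neg, div_mul_cancel₀ _ hne2]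
        ring
    · have hlt : c*t₀ < c*t := by nlinarith
      obtain ⟨ξ, hξ, heq⟩ := exists_hasDerivAt_eq_slope (fun x => d₁ x t) (fun x => d₂ x t) hlt
        (hcont _ _ ha₀)
        (fun x hx => hd2 x t (lt_trans ha₀ hx.1) ht)
      refine ⟨ξ, ?_, lt_trans ha₀ hξ.1, ?_⟩
      · have habs1 : |t - t₀| = t - t₀ := abs_of_pos (by linarith)
        rw [habs1, abs_le]
        constructor <;> nlinarith [hξ.1, hξ.2]
      · have hne2 : c*t - c*t₀ ≠ 0 := sub_ne_zero.mpr (ne_of_gt hlt)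
        rw [heq, div_mul_cancel₀ _ hne2]
  have hF : HasDerivAt (fun t => d₁ (c*t) t - d₁ (c*t₀) t) (c * d₂ (c*t₀) t₀) t₀ := by
    rw [hasDerivAt_iff_tendsto_slope]
    set Ξ : ℝ → ℝ := fun t => if h : 0 < t ∧ t ≠ t₀ then (key t h.1 h.2).choose else c*t₀ with hΞdef
    have hΞ1 : ∀ t (h1 : 0 < t) (h2 : t ≠ t₀), |Ξ t - c*t₀| ≤ c * |t - t₀| ∧ 0 < Ξ t ∧
        d₁ (c*t) t - d₁ (c*t₀) t = d₂ (Ξ t) t * (c*t - c*t₀) := by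
      intro t h1 h2
      simp only [hΞdef, dif_pos (⟨h1, h2⟩ : 0 < t ∧ t ≠ t₀)]
      exact (key t h1 h2).choose_spec
    have hΞb : ∀ t, |Ξ t - c*t₀| ≤ c * |t - t₀| := by
      intro t
      by_cases h : 0 < t ∧ t ≠ t₀
      · exact (hΞ1 t h.1 h.2).1
      · simp only [hΞdef, dif_neg h, sub_self, abs_zero]
        positivity
    have hΞtendsto : Tendsto Ξ (𝓝[≠] t₀) (𝓝 (c*t₀)) := by
      have h1 : Tendsto (fun t => Ξ t - c*t₀) (𝓝[≠] t₀) (𝓝 0) := by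
        apply squeeze_zero_norm (a := fun t => c * |t - t₀|)
            (fun t => by rw [Real.norm_eq_abs]; exact hΞb t)
        have hcontf : Continuous fun t : ℝ => c * |t - t₀| :=
          continuous_const.mul (continuous_id.sub continuous_const).abs
        have := hcontf.tendsto' t₀ 0 (by simp)
        exact this.mono_left nhdsWithin_le_nhds
      have := h1.add_const (c*t₀)
      simpa using this
    have hpair : Tendsto (fun t => ((Ξ t, t) : ℝ×ℝ)) (𝓝[≠] t₀) (𝓝 (c*t₀, t₀)) :=
      hΞtendsto.prodMk_nhds (tendsto_id.mono_left nhdsWithin_le_nhds)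
    have hcd2 : ContinuousAt (fun q : ℝ×ℝ => d₂ q.1 q.2) (c*t₀, t₀) :=
      hd2cont.continuousAt ((isOpen_Ioi.prod isOpen_Ioi).mem_nhds ⟨ha₀, ht₀⟩)
    have htends : Tendsto (fun t => c * d₂ (Ξ t) t) (𝓝[≠] t₀) (𝓝 (c * d₂ (c*t₀) t₀)) :=
      tendsto_const_nhds.mul (hcd2.tendsto.comp hpair)
    have ev1 : ∀ᶠ t in 𝓝[≠] t₀, 0 < t :=
      (eventually_of_mem (isOpen_Ioi.mem_nhds ht₀) fun z hz => hz).filter_mono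
        nhdsWithin_le_nhds
    have ev2 : ∀ᶠ t in 𝓝[≠] t₀, t ≠ t₀ := by
      have := eventually_mem_nhdsWithin (a := t₀) (s := ({t₀}ᶜ : Set ℝ))
      exact this.mono fun t ht => by simpa using ht
    apply htends.congr'
    filter_upwards [ev1, ev2] with t ht htne
    have h3 := (hΞ1 t ht htne).2.2
    rw [slope_def_field, h3]
    have : c*t - c*t₀ = c * (t - t₀) := by ring
    rw [this]
    have htne' : t - t₀ ≠ 0 := sub_ne_zero.mpr htne
    field_simp
    ring
  have := hF.add hG
  simpa [Pi.add_def] using this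


lemma s_lt {d₁ d₂ s : ℝ → ℝ → ℝ}
    (hd2 : ∀ a b : ℝ, 0 < a → 0 < b → HasDerivAt (fun t => d₁ t b) (d₂ a b) a)
    (hd1neg : ∀ a b : ℝ, 0 < a → a < b → d₁ a b < 0)
    (hd1bb : ∀ b : ℝ, 0 < b → d₁ b b = 0)
    (hspec : ∀ γ b : ℝ, 0 < γ → 0 < b →
      0 ≤ s γ b ∧ 2 * s γ b + γ * d₁ (s γ b) b = 0 ∧
      ∀ a : ℝ, 0 ≤ a → 2 * a + γ * d₁ a b = 0 → a = s γ b)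
    {γ b : ℝ} (hγ : 0 < γ) (hb : 0 < b) : s γ b < b := by
  obtain ⟨hs0, hseq, _⟩ := hspec γ b hγ hb
  set σ := s γ b with hσdef
  rcases eq_or_lt_of_le hs0 with h0 | hσpos
  · rw [← h0]; exact hb
  by_cases hlt : σ < b
  · exact hlt
  exfalso
  push_neg at hlt
  have hσb : b < σ := by
    rcases eq_or_lt_of_le hlt with h | h
    · exfalso
      rw [← h, hd1bb b hb] at hseq
      nlinarith
    · exact h
  have hd1σ : d₁ σ b < 0 := by
    by_contra hge; push_neg at hge
    nlinarith [mul_nonneg hγ.le hge]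
  set q : ℝ → ℝ := fun a => -(2*a) / d₁ a b with hq
  have hcontd1 : ∀ x : ℝ, 0 < x → ContinuousAt (fun a => d₁ a b) x :=
    fun x hx => (hd2 x b hx hb).continuousAt
  have hqcont : ∀ x : ℝ, 0 < x → d₁ x b ≠ 0 → ContinuousAt q x := by
    intro x hx hne
    exact ContinuousAt.div ((continuous_const.mul continuous_id).neg.continuousAt)
      (hcontd1 x hx) hne
  set a' := b/2 with ha'def
  have ha' : 0 < a' := by positivity
  have ha'b : a' < b := by rw [ha'def]; linarith
  have hd1a' : d₁ a' b < 0 := hd1neg a' b ha' ha'b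
  set V := max (q a') γ + 1 with hV
  have hVγ : γ < V := lt_of_le_of_lt (le_max_right _ _) (lt_add_one _)
  have hVa' : q a' < V := lt_of_le_of_lt (le_max_left _ _) (lt_add_one _)
  have hVpos : 0 < V := lt_trans hγ hVγ
  have hqe : ∀ a : ℝ, (2*a) * (-(d₁ a b))⁻¹ = q a := by
    intro a
    rw [hq]
    simp only []
    rw [← div_eq_mul_inv, div_neg, neg_div]
  -- Part A : a root candidate in (0, b)
  have htopA : Tendsto q (𝓝[<] b) atTop := by
    have h2a : Tendsto (fun a : ℝ => 2*a) (𝓝[<] b) (𝓝 (2*b)) :=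
      ((continuous_const.mul continuous_id).tendsto b).mono_left nhdsWithin_le_nhds
    have hneg : Tendsto (fun a : ℝ => -(d₁ a b)) (𝓝[<] b) (𝓝[>] 0) := by
      rw [tendsto_nhdsWithin_iff]
      constructor
      · have := ((hcontd1 b hb).neg.tendsto).mono_left (nhdsWithin_le_nhds (s := Iio b))
        simpa [hd1bb b hb, Pi.neg_def] using this
      · filter_upwards [Ioo_mem_nhdsLT_of_mem (⟨hb, le_refl b⟩ : b ∈ Ioc 0 b)] with x hx
        exact neg_pos.mpr (hd1neg x b hx.1 hx.2)
    have hinv : Tendsto (fun a : ℝ => (-(d₁ a b))⁻¹) (𝓝[<] b) atTop :=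
      tendsto_inv_nhdsGT_zero.comp hneg
    exact (Tendsto.pos_mul_atTop (by linarith) h2a hinv).congr hqe
  obtain ⟨z, hzV, hzmem⟩ :=
    ((htopA.eventually_gt_atTop V).and
      (eventually_of_mem (Ioo_mem_nhdsLT_of_mem (⟨ha'b, le_refl b⟩ : b ∈ Ioc a' b))
        (fun x hx => hx))).exists
  have hqa1 : V ∈ q '' Icc a' z := by
    have hc : ContinuousOn q (Icc a' z) := by
      intro x hx
      have hx0 : 0 < x := lt_of_lt_of_le ha' hx.1
      have hxb : x < b := lt_of_le_of_lt hx.2 hzmem.2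
      exact (hqcont x hx0 (ne_of_lt (hd1neg x b hx0 hxb))).continuousWithinAt
    exact intermediate_value_Icc (le_of_lt hzmem.1)
      hc ⟨hVa'.le, hzV.le⟩
  obtain ⟨a₁, ha₁mem, ha₁⟩ := hqa1
  -- Part B : a root candidate in (b, σ]
  set S := {a : ℝ | a ∈ Icc b σ ∧ d₁ a b = 0} with hSdef
  have hScl : IsClosed S := by
    have hcont : ContinuousOn (fun a => d₁ a b) (Icc b σ) :=
      fun x hx => (hcontd1 x (lt_of_lt_of_le hb hx.1)).continuousWithinAt
    have : S = Icc b σ ∩ (fun a => d₁ a b) ⁻¹' {0} := by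
      ext x; simp [hSdef]
    rw [this]
    exact hcont.preimage_isClosed_of_isClosed isClosed_Icc isClosed_singleton
  have hScomp : IsCompact S := isCompact_Icc.of_isClosed_subset hScl (fun x hx => hx.1)
  have hSne : S.Nonempty := ⟨b, ⟨⟨le_refl b, hσb.le⟩, hd1bb b hb⟩⟩
  set L := sSup S with hLdef
  have hLS : L ∈ S := hScomp.sSup_mem hSne
  have hbL : b ≤ L := hLS.1.1
  have hLσ : L < σ := by
    rcases eq_or_lt_of_le hLS.1.2 with h | h
    · exfalso; rw [h] at hLS; exact (ne_of_lt hd1σ) hLS.2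
    · exact h
  have hL0 : 0 < L := lt_of_lt_of_le hb hbL
  have hnegB : ∀ z, L < z → z ≤ σ → d₁ z b < 0 := by
    intro z hz1 hz2
    by_contra hge; push_neg at hge
    have hcz : ContinuousOn (fun a => d₁ a b) (Icc z σ) :=
      fun x hx => (hcontd1 x (lt_trans hL0 (lt_of_lt_of_le hz1 hx.1))).continuousWithinAt
    obtain ⟨w, hw, hw0⟩ := intermediate_value_Icc' hz2 hcz ⟨hd1σ.le, hge⟩
    have hwS : w ∈ S := ⟨⟨le_trans hbL (le_trans hz1.le hw.1), hw.2⟩, hw0⟩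
    have : w ≤ L := le_csSup hScomp.bddAbove hwS
    linarith [hw.1]
  have htopB : Tendsto q (𝓝[>] L) atTop := by
    have h2a : Tendsto (fun a : ℝ => 2*a) (𝓝[>] L) (𝓝 (2*L)) :=
      ((continuous_const.mul continuous_id).tendsto L).mono_left nhdsWithin_le_nhds
    have hneg : Tendsto (fun a : ℝ => -(d₁ a b)) (𝓝[>] L) (𝓝[>] 0) := by
      rw [tendsto_nhdsWithin_iff]
      constructor
      · have := ((hcontd1 L hL0).neg.tendsto).mono_left (nhdsWithin_le_nhds (s := Ioi L))
        simpa [hLS.2, Pi.neg_def] using this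
      · filter_upwards [Ioc_mem_nhdsGT_of_mem (⟨le_refl L, hLσ⟩ : L ∈ Ico L σ)] with x hx
        exact neg_pos.mpr (hnegB x hx.1 hx.2)
    have hinv : Tendsto (fun a : ℝ => (-(d₁ a b))⁻¹) (𝓝[>] L) atTop :=
      tendsto_inv_nhdsGT_zero.comp hneg
    exact (Tendsto.pos_mul_atTop (by linarith) h2a hinv).congr hqe
  obtain ⟨w, hwV, hwmem⟩ :=
    ((htopB.eventually_gt_atTop V).and
      (eventually_of_mem (Ioo_mem_nhdsGT_of_mem (⟨le_refl L, hLσ⟩ : L ∈ Ico L σ))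
        (fun x hx => hx))).exists
  have hqσ : q σ = γ := by
    have hd1σeq : d₁ σ b = -(2*σ)/γ := by
      field_simp
      linarith
    rw [hq]
    simp only []
    rw [hd1σeq]
    rw [div_div_eq_mul_div, mul_comm, mul_div_assoc,
      div_self (by nlinarith : -(2*σ) ≠ 0), mul_one]
  have hqa2 : V ∈ q '' Icc w σ := by
    have hc : ContinuousOn q (Icc w σ) := by
      intro x hx
      have hx0 : 0 < x := lt_trans hL0 (lt_of_lt_of_le hwmem.1 hx.1)
      exact (hqcont x hx0 (ne_of_lt (hnegB x (lt_of_lt_of_le hwmem.1 hx.1) hx.2))).continuousWithinAt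
    exact intermediate_value_Icc' hwmem.2.le hc ⟨by rw [hqσ]; exact hVγ.le, hwV.le⟩
  obtain ⟨a₂, ha₂mem, ha₂⟩ := hqa2
  -- both are roots for the parameter V, contradiction with uniqueness
  have ha₁pos : 0 < a₁ := lt_of_lt_of_le ha' ha₁mem.1
  have ha₁lt : a₁ < b := lt_of_le_of_lt ha₁mem.2 hzmem.2
  have ha₂gt : b < a₂ := lt_of_le_of_lt hbL (lt_of_lt_of_le hwmem.1 ha₂mem.1)
  have hd1a₁ : d₁ a₁ b < 0 := hd1neg a₁ b ha₁pos ha₁lt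
  have hd1a₂ : d₁ a₂ b < 0 := hnegB a₂ (lt_of_lt_of_le hwmem.1 ha₂mem.1) ha₂mem.2
  have heq₁ : 2*a₁ + V * d₁ a₁ b = 0 := by
    rw [hq] at ha₁
    simp only [] at ha₁
    rw [div_eq_iff (ne_of_lt hd1a₁)] at ha₁
    linarith
  have heq₂ : 2*a₂ + V * d₁ a₂ b = 0 := by
    rw [hq] at ha₂
    simp only [] at ha₂
    rw [div_eq_iff (ne_of_lt hd1a₂)] at ha₂
    linarith
  have h1 := (hspec V b hVpos hb).2.2 a₁ ha₁pos.le heq₁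
  have h2 := (hspec V b hVpos hb).2.2 a₂ (by linarith) heq₂
  rw [h1] at ha₁lt
  rw [h2] at ha₂gt
  linarith


end Stmt7Aux

/-- Lemma: generalized monotonicity of the eigenvalue map.
Under Assumptions 2, 4 and 5 for the generator, `s(γ,b₂)/s(γ,b₁) ≤ b₂/b₁` for all
`γ > 0` and `0 < b₁ ≤ b₂`. -/
theorem stmt_7
    (d : ℝ → ℝ → EReal) (d₁ d₂ d₁b s : ℝ → ℝ → ℝ)
    (hgen : GenBasic d)
    (hA4 : Assumption4 d d₁ d₂)
    (hA5 : Assumption5 d₁ d₂ d₁b)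
    (hs : EigenMapSpec d₁ s) :
    ∀ γ : ℝ, 0 < γ → ∀ b₁ b₂ : ℝ, 0 < b₁ → b₁ ≤ b₂ →
      s γ b₂ / s γ b₁ ≤ b₂ / b₁ := by
  classical
  obtain ⟨hnn, hzero, -⟩ := hgen
  obtain ⟨hfin, hd1, hd2, hd2c, hcvx⟩ := hA4
  obtain ⟨hd1b, hd2cont2, hd1bcont, hineq⟩ := hA5
  have hd1bb : ∀ b : ℝ, 0 < b → d₁ b b = 0 :=
    fun b hb => Stmt7Aux.d1_diag_zero hnn hzero hfin hd1 hb
  have hd1neg : ∀ a b : ℝ, 0 < a → a < b → d₁ a b < 0 :=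
    fun a b ha hab => Stmt7Aux.d1_neg hnn hzero hfin hd1 hcvx ha hab
  intro γ hγ b₁ b₂ hb₁ hb12
  have hb₂ : 0 < b₂ := lt_of_lt_of_le hb₁ hb12
  obtain ⟨hs₁0, hs₁eq, -⟩ := hs.2 γ b₁ hγ hb₁
  obtain ⟨hs₂0, hs₂eq, -⟩ := hs.2 γ b₂ hγ hb₂
  rcases eq_or_lt_of_le hs₂0 with h₂0 | hs₂pos
  · rw [← h₂0, zero_div]
    positivity
  rcases eq_or_lt_of_le hs₁0 with h₁0 | hs₁pos
  · rw [← h₁0, div_zero]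
    positivity
  have hslt₁ : s γ b₁ < b₁ := Stmt7Aux.s_lt hd2 hd1neg hd1bb hs.2 hγ hb₁
  have hslt₂ : s γ b₂ < b₂ := Stmt7Aux.s_lt hd2 hd1neg hd1bb hs.2 hγ hb₂
  set s₁ := s γ b₁ with hs₁def
  set s₂ := s γ b₂ with hs₂def
  set c := s₁ / b₁ with hcdef
  have hcpos : 0 < c := div_pos hs₁pos hb₁
  have hclt1 : c < 1 := (div_lt_one hb₁).mpr hslt₁
  have hcb₁ : c * b₁ = s₁ := div_mul_cancel₀ _ (ne_of_gt hb₁)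
  set h : ℝ → ℝ := fun t => 2*(c*t) + γ * d₁ (c*t) t with hhdef
  have hder : ∀ t : ℝ, 0 < t →
      HasDerivAt h (2*c + γ*(c * d₂ (c*t) t + d₁b (c*t) t)) t := by
    intro t ht
    have h1 : HasDerivAt (fun u : ℝ => 2*(c*u)) (2*c) t := by
      have := (hasDerivAt_id t).const_mul (2*c)
      simpa [mul_assoc, mul_one] using this
    have h2 := (Stmt7Aux.path_deriv hd2 hd1b hd2cont2 hcpos ht).const_mul γ
    exact h1.add h2
  have hmono : MonotoneOn (fun t => h t / t) (Set.Icc b₁ b₂) := by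
    apply monotoneOn_of_deriv_nonneg (convex_Icc b₁ b₂)
    · intro t ht
      have ht0 : 0 < t := lt_of_lt_of_le hb₁ ht.1
      exact (((hder t ht0).div (hasDerivAt_id t) (ne_of_gt ht0)).continuousAt).continuousWithinAt
    · intro t ht
      rw [interior_Icc] at ht
      have ht0 : 0 < t := lt_trans hb₁ ht.1
      exact ((hder t ht0).div (hasDerivAt_id t)
        (ne_of_gt ht0)).differentiableAt.differentiableWithinAt
    · intro t ht
      rw [interior_Icc] at ht
      have ht0 : 0 < t := lt_trans hb₁ ht.1
      have hD : HasDerivAt (fun u => h u / u)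
          (((2*c + γ*(c * d₂ (c*t) t + d₁b (c*t) t)) * t - h t) / t^2) t := by
        have := (hder t ht0).div (hasDerivAt_id t) (ne_of_gt ht0)
        simpa [Pi.div_def] using this
      rw [hD.deriv]
      have hct : 0 < c*t := mul_pos hcpos ht0
      have hctt : c*t < t := by nlinarith
      have hkey := hineq (c*t) t hct hctt
      apply div_nonneg _ (sq_nonneg _)
      simp only [hhdef, id_eq]
      nlinarith [mul_nonneg hγ.le (sub_nonneg.mpr hkey)]
  have hHb₁ : h b₁ / b₁ = 0 := by
    have hb₁eq : h b₁ = 0 := by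
      simp only [hhdef]
      rw [hcb₁]
      linarith [hs₁eq]
    rw [hb₁eq, zero_div]
  have hhb₂ : 0 ≤ h b₂ := by
    have hm : h b₁ / b₁ ≤ h b₂ / b₂ :=
      hmono (left_mem_Icc.mpr hb12) (right_mem_Icc.mpr hb12) hb12
    rw [hHb₁] at hm
    by_contra hneg
    push_neg at hneg
    have : h b₂ / b₂ < 0 := div_neg_of_neg_of_pos hneg hb₂
    linarith
  have hApos : 0 < c * b₂ := mul_pos hcpos hb₂
  have hge : 0 ≤ 2*(c*b₂) + γ * d₁ (c*b₂) b₂ := by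
    simpa only [hhdef] using hhb₂
  have hs₂leA : s₂ ≤ c * b₂ := by
    by_contra hgt
    push_neg at hgt
    have hmon := Stmt7Aux.d1_mono hnn hfin hd1 hcvx hb₂ hApos hgt.le hslt₂.le
    nlinarith [mul_le_mul_of_nonneg_left hmon hγ.le]
  rw [div_le_div_iff₀ hs₁pos hb₁]
  have e : (c * b₂) * b₁ = b₂ * s₁ := by
    calc (c * b₂) * b₁ = (c * b₁) * b₂ := by ring
    _ = s₁ * b₂ := by rw [hcb₁]
    _ = b₂ * s₁ := by ring
  nlinarith [mul_le_mul_of_nonneg_right hs₂leA hb₁.le]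
end
end
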